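/- arXiv:2112.04976 — 2 statements merged into one kernel-verified Lean document; each statement's English description precedes it below -/
import Mathlib

section
/- Assume β < β_cr. For the block magnetization chain started from any value s ≥ 0 (componentwise) and any t ≥ 0: 0 ≤ E_s[Σ_{i=1}^m a_i S_t^{(i)}] ≤ ρ_n^t Σ_{i=1}^m a_i s^{(i)}, and for each i, 0 ≤ E_s[S_t^{(i)}] ≤ √p_i · ρ_n^t (Σ_{j=1}^m (s^{(j)})²/p_j)^{1/2}. -/
open Finset MeasureTheory Real Filter

namespace MultiIsing

/-- The real spin value attached to a Boolean spin. -/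
def spin (b : Bool) : ℝ := if b then 1 else -1

/-- `r₊(s) = e^{βs}/(e^{βs}+e^{-βs})`. -/
noncomputable def rp (β s : ℝ) : ℝ :=
  Real.exp (β * s) / (Real.exp (β * s) + Real.exp (-(β * s)))

/-- `r₋(s) = e^{-βs}/(e^{βs}+e^{-βs})`. -/
noncomputable def rm (β s : ℝ) : ℝ :=
  Real.exp (-(β * s)) / (Real.exp (β * s) + Real.exp (-(β * s)))

variable {m : ℕ}

/-- `g : Fin n → Fin m` realizes the partition of `n` vertices into groups
of sizes `n * p i`. -/
def IsPartition (n : ℕ) (p : Fin m → ℝ) (g : Fin n → Fin m) : Prop :=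
  0 < n ∧ ∀ i, ((Finset.univ.filter fun v => g v = i).card : ℝ) = n * p i

/-- Standing hypotheses on the parameters of the multi-component Ising model. -/
structure Params (m : ℕ) (p : Fin m → ℝ) (k : Fin m → Fin m → ℝ) : Prop where
  hm : 0 < m
  hp : ∀ i, 0 < p i
  hpsum : ∑ i, p i = 1
  hkpos : ∀ i j, 0 < k i j
  hksymm : ∀ i j, k i j = k j i

/-- `a` is the (normalized, positive) Perron–Frobenius left eigenvector of the
matrix `B = (p i * k i j)`; its eigenvalue is then necessarily
`∑ i j, a i * p i * k i j`. -/
structure PFvec (m : ℕ) (p : Fin m → ℝ) (k : Fin m → Fin m → ℝ) (a : Fin m → ℝ) : Prop where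
  hpos : ∀ i, 0 < a i
  hsum : ∑ i, a i = 1
  heig : ∀ j, ∑ i, a i * (p i * k i j) = (∑ i, ∑ j, a i * (p i * k i j)) * a j

/-- The critical inverse temperature `β_cr = 1 / (∑ i j, a i * p i * k i j)`. -/
noncomputable def betaCr (p : Fin m → ℝ) (k : Fin m → Fin m → ℝ) (a : Fin m → ℝ) : ℝ :=
  1 / (∑ i, ∑ j, a i * (p i * k i j))

/-- The mean field `S^v = ∑_{w ≠ v} K(v,w) σ(w)` at vertex `v`. -/
noncomputable def meanField (n : ℕ) (k : Fin m → Fin m → ℝ) (g : Fin n → Fin m)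
    (σ : Fin n → Bool) (v : Fin n) : ℝ :=
  ∑ w ∈ Finset.univ.filter (fun w => w ≠ v), (k (g v) (g w) / n) * spin (σ w)

/-- One-step transition probabilities of the Glauber dynamics: a uniformly chosen
vertex is refreshed to `±1` with probabilities `r±(S^v)`. -/
noncomputable def glauber (n : ℕ) (β : ℝ) (k : Fin m → Fin m → ℝ) (g : Fin n → Fin m)
    (σ σ' : Fin n → Bool) : ℝ :=
  (1 / n) * ∑ v,
    ((if σ' = Function.update σ v true then rp β (meanField n k g σ v) else 0)
      + (if σ' = Function.update σ v false then rm β (meanField n k g σ v) else 0))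

/-- `t`-step transition probabilities of a transition kernel on a finite state space. -/
noncomputable def iter {Ω : Type*} [Fintype Ω] [DecidableEq Ω] (P : Ω → Ω → ℝ) :
    ℕ → Ω → Ω → ℝ
  | 0 => fun x y => if x = y then 1 else 0
  | (t + 1) => fun x y => ∑ z, iter P t x z * P z y

/-- The Gibbs measure `μ_n(σ) ∝ exp(β ∑_{unordered pairs v ≠ w} K(v,w) σ(v) σ(w))`. -/
noncomputable def gibbs (n : ℕ) (β : ℝ) (k : Fin m → Fin m → ℝ) (g : Fin n → Fin m)
    (σ : Fin n → Bool) : ℝ :=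
  Real.exp (β * ((1 / 2) * ∑ v, ∑ w ∈ Finset.univ.filter (fun w => w ≠ v),
      (k (g v) (g w) / n) * spin (σ v) * spin (σ w))) /
    ∑ σ' : Fin n → Bool, Real.exp (β * ((1 / 2) * ∑ v, ∑ w ∈ Finset.univ.filter (fun w => w ≠ v),
      (k (g v) (g w) / n) * spin (σ' v) * spin (σ' w)))

/-- The total-variation distance between two distributions on a finite space. -/
noncomputable def tvDist {Ω : Type*} [Fintype Ω] (μ ν : Ω → ℝ) : ℝ :=
  (1 / 2) * ∑ x, |μ x - ν x|

/-- The worst-case total-variation distance to stationarity after `t` steps. -/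
noncomputable def dn (n : ℕ) (β : ℝ) (k : Fin m → Fin m → ℝ) (g : Fin n → Fin m)
    (t : ℕ) : ℝ :=
  ⨆ σ : Fin n → Bool, tvDist (fun σ' => iter (glauber n β k g) t σ σ') (gibbs n β k g)

/-- The total-variation mixing time `t_mix = min {t : d_n(t) ≤ 1/4}`. -/
noncomputable def tmix (n : ℕ) (β : ℝ) (k : Fin m → Fin m → ℝ) (g : Fin n → Fin m) : ℕ :=
  sInf {t : ℕ | dn n β k g t ≤ 1 / 4}

/-- The normalized block magnetization `S^{(i)}(σ) = (1/n) ∑_{v ∈ G_i} σ(v)`. -/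
noncomputable def Smag (n : ℕ) (g : Fin n → Fin m) (σ : Fin n → Bool) (i : Fin m) : ℝ :=
  (1 / n) * ∑ v ∈ Finset.univ.filter (fun v => g v = i), spin (σ v)

/-- The unnormalized block magnetization `M^{(i)}(σ) = ∑_{v ∈ G_i} σ(v)`. -/
noncomputable def Mvec (n : ℕ) (g : Fin n → Fin m) (σ : Fin n → Bool) (i : Fin m) : ℝ :=
  ∑ v ∈ Finset.univ.filter (fun v => g v = i), spin (σ v)

/-- The `i`-th block Hamming distance between two configurations. -/
noncomputable def blockDist (n : ℕ) (g : Fin n → Fin m) (σ σ' : Fin n → Bool) (i : Fin m) : ℝ :=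
  (1 / 2) * ∑ v ∈ Finset.univ.filter (fun v => g v = i), |spin (σ v) - spin (σ' v)|

/-- The matrix `Q = (1 - 1/n) I + (β/n) B` where `B = (p i * k i j)`. -/
noncomputable def Qmat (n : ℕ) (β : ℝ) (p : Fin m → ℝ) (k : Fin m → Fin m → ℝ) :
    Matrix (Fin m) (Fin m) ℝ :=
  (1 - 1 / (n : ℝ)) • (1 : Matrix (Fin m) (Fin m) ℝ) +
    (β / n) • Matrix.of (fun i j => p i * k i j)

/-- `μ` is the law of the Markov chain with transition probabilities `P`
started at `x0`, as a measure on path space. -/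
def IsPathMeasure {Ω : Type*} [Fintype Ω] [DecidableEq Ω] [MeasurableSpace Ω]
    (P : Ω → Ω → ℝ) (x0 : Ω) (μ : Measure (ℕ → Ω)) : Prop :=
  IsProbabilityMeasure μ ∧
    ∀ t : ℕ, ∀ f : ℕ → Ω,
      (μ {ω | ∀ s ≤ t, ω s = f s}).toReal =
        (if f 0 = x0 then ∏ s ∈ Finset.range t, P (f s) (f (s + 1)) else 0)

/-- `μ` is a coupling of two copies of the Markov chain with transition
probabilities `P`, started at `x0` and `y0` respectively. -/
def IsCoupling {Ω : Type*} [Fintype Ω] [DecidableEq Ω] [MeasurableSpace Ω]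
    (P : Ω → Ω → ℝ) (x0 y0 : Ω) (μ : Measure (ℕ → Ω × Ω)) : Prop :=
  IsProbabilityMeasure μ ∧
    (∀ t : ℕ, ∀ f : ℕ → Ω,
      (μ {ω | ∀ s ≤ t, (ω s).1 = f s}).toReal =
        (if f 0 = x0 then ∏ s ∈ Finset.range t, P (f s) (f (s + 1)) else 0)) ∧
    (∀ t : ℕ, ∀ f : ℕ → Ω,
      (μ {ω | ∀ s ≤ t, (ω s).2 = f s}).toReal =
        (if f 0 = y0 then ∏ s ∈ Finset.range t, P (f s) (f (s + 1)) else 0))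


/-- The expectation of `S_t^{(i)}` for the Glauber dynamics started at `σ`. -/
noncomputable def Eexp (n : ℕ) (β : ℝ) {m : ℕ} (k : Fin m → Fin m → ℝ) (g : Fin n → Fin m)
    (σ : Fin n → Bool) (t : ℕ) (i : Fin m) : ℝ :=
  ∑ σ' : Fin n → Bool, iter (glauber n β k g) t σ σ' * Smag n g σ' i

@[simp] lemma spin_true : spin true = 1 := rfl
@[simp] lemma spin_false : spin false = -1 := rfl

lemma denom_pos (x : ℝ) : 0 < Real.exp x + Real.exp (-x) := by positivity

lemma two_le_denom (x : ℝ) : 2 ≤ Real.exp x + Real.exp (-x) := by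
  have h1 := Real.add_one_le_exp x
  have h2 := Real.add_one_le_exp (-x)
  linarith

lemma rm_eq (β s : ℝ) : rm β s = 1 - rp β s := by
  have h := (denom_pos (β * s)).ne'
  rw [rp, rm, eq_sub_iff_add_eq, ← add_div, div_eq_one_iff_eq h]; ring

lemma rp_nonneg (β s : ℝ) : 0 ≤ rp β s :=
  div_nonneg (Real.exp_pos _).le (denom_pos _).le

lemma rm_nonneg (β s : ℝ) : 0 ≤ rm β s :=
  div_nonneg (Real.exp_pos _).le (denom_pos _).le

/-- key exp inequality: for `0 ≤ x`, `e^x - e^{-x} ≤ x * (e^x + e^{-x})`. -/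
lemma exp_ineq {x : ℝ} (hx : 0 ≤ x) :
    Real.exp x - Real.exp (-x) ≤ x * (Real.exp x + Real.exp (-x)) := by
  have key : ∀ y : ℝ, HasDerivAt (fun z => z * (Real.exp z + Real.exp (-z)) -
      (Real.exp z - Real.exp (-z))) (y * (Real.exp y - Real.exp (-y))) y := by
    intro y
    have h1 : HasDerivAt (fun z : ℝ => Real.exp z) (Real.exp y) y := Real.hasDerivAt_exp y
    have h2 : HasDerivAt (fun z : ℝ => Real.exp (-z)) (-Real.exp (-y)) y := by
      simpa [Function.comp_def] using (Real.hasDerivAt_exp (-y)).comp y (hasDerivAt_neg y)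
    have h3 := ((hasDerivAt_id y).mul (h1.add h2)).sub (h1.sub h2)
    refine h3.congr_deriv ?_
    simp only [id_eq, one_mul, Pi.add_apply]
    ring
  have hmono : MonotoneOn (fun z => z * (Real.exp z + Real.exp (-z)) -
      (Real.exp z - Real.exp (-z))) (Set.Ici (0:ℝ)) := by
    apply monotoneOn_of_deriv_nonneg (convex_Ici 0)
    · exact (Continuous.continuousOn (by continuity))
    · intro y hy
      exact ((key y).differentiableAt).differentiableWithinAt
    · intro y hy
      rw [(key y).deriv]
      rw [interior_Ici, Set.mem_Ioi] at hy
      have : Real.exp (-y) ≤ Real.exp y := Real.exp_le_exp.2 (by linarith)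
      nlinarith
  have h0 := hmono (Set.self_mem_Ici) (Set.mem_Ici.2 hx) hx
  simp only [zero_mul, neg_zero, Real.exp_zero, sub_self, zero_sub] at h0
  linarith

/-- difference formula for rp. -/
lemma rp_sub (β s s' : ℝ) :
    rp β s - rp β s' = (Real.exp (β * (s - s')) - Real.exp (-(β * (s - s')))) /
      ((Real.exp (β * s) + Real.exp (-(β * s))) * (Real.exp (β * s') + Real.exp (-(β * s')))) := by
  rw [rp, rp, div_sub_div _ _ (denom_pos (β * s)).ne' (denom_pos (β * s')).ne']
  congr 1
  rw [show β * (s - s') = β * s + -(β * s') from by ring,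
    show -(β * s + -(β * s')) = -(β * s) + β * s' from by ring,
    Real.exp_add, Real.exp_add]
  ring

lemma rp_mono {β s s' : ℝ} (hβ : 0 ≤ β) (h : s' ≤ s) : rp β s' ≤ rp β s := by
  have hnum : 0 ≤ Real.exp (β * (s - s')) - Real.exp (-(β * (s - s'))) := by
    have : Real.exp (-(β * (s - s'))) ≤ Real.exp (β * (s - s')) :=
      Real.exp_le_exp.2 (by nlinarith)
    linarith
  have h2 : 0 ≤ rp β s - rp β s' := by
    rw [rp_sub]
    exact div_nonneg hnum (mul_pos (denom_pos _) (denom_pos _)).le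
  linarith

lemma exp_core {d : ℝ} (hd : 0 ≤ d) :
    Real.exp d - Real.exp (-d) ≤ d / 2 * (2 + Real.exp d + Real.exp (-d)) := by
  have hkey := exp_ineq (show (0:ℝ) ≤ d / 2 by linarith)
  have he : Real.exp d = Real.exp (d/2) * Real.exp (d/2) := by
    rw [← Real.exp_add]; congr 1; ring
  have he' : Real.exp (-d) = Real.exp (-(d/2)) * Real.exp (-(d/2)) := by
    rw [← Real.exp_add]; congr 1; ring
  have hone : Real.exp (d/2) * Real.exp (-(d/2)) = 1 := by
    rw [← Real.exp_add]; simp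
  nlinarith [denom_pos (d/2), hkey]

lemma rp_lip {β s s' : ℝ} (hβ : 0 ≤ β) (h : s' ≤ s) :
    2 * (rp β s - rp β s') ≤ β * (s - s') := by
  have hd : 0 ≤ β * (s - s') := by nlinarith
  have hnum : 0 ≤ Real.exp (β * (s - s')) - Real.exp (-(β * (s - s'))) := by
    have : Real.exp (-(β * (s - s'))) ≤ Real.exp (β * (s - s')) :=
      Real.exp_le_exp.2 (by linarith)
    linarith
  have hQpos : (0:ℝ) < 2 + Real.exp (β * (s - s')) + Real.exp (-(β * (s - s'))) := by positivity
  have hQle : 2 + Real.exp (β * (s - s')) + Real.exp (-(β * (s - s'))) ≤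
      (Real.exp (β * s) + Real.exp (-(β * s))) * (Real.exp (β * s') + Real.exp (-(β * s'))) := by
    have e1 : Real.exp (β * s) * Real.exp (-(β * s')) = Real.exp (β * (s - s')) := by
      rw [← Real.exp_add]; congr 1; ring
    have e2 : Real.exp (-(β * s)) * Real.exp (β * s') = Real.exp (-(β * (s - s'))) := by
      rw [← Real.exp_add]; congr 1; ring
    have e3 : 2 ≤ Real.exp (β * s) * Real.exp (β * s') +
        Real.exp (-(β * s)) * Real.exp (-(β * s')) := by
      rw [← Real.exp_add, ← Real.exp_add,
        show -(β * s) + -(β * s') = -(β * s + β * s') from by ring]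
      exact two_le_denom _
    nlinarith [e1, e2, e3]
  have hcore := exp_core hd
  calc 2 * (rp β s - rp β s')
      = 2 * ((Real.exp (β * (s - s')) - Real.exp (-(β * (s - s')))) /
        ((Real.exp (β * s) + Real.exp (-(β * s))) * (Real.exp (β * s') + Real.exp (-(β * s'))))) := by
        rw [rp_sub]
    _ ≤ 2 * ((Real.exp (β * (s - s')) - Real.exp (-(β * (s - s')))) /
        (2 + Real.exp (β * (s - s')) + Real.exp (-(β * (s - s'))))) := by gcongr
    _ ≤ 2 * (β * (s - s') / 2) := by
        gcongr 2 * ?_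
        rw [div_le_div_iff₀ hQpos (by norm_num)]
        nlinarith [hcore]
    _ = β * (s - s') := by ring

lemma iter_succ_left {Ω : Type*} [Fintype Ω] [DecidableEq Ω] (P : Ω → Ω → ℝ) (t : ℕ)
    (x y : Ω) : iter P (t + 1) x y = ∑ z, P x z * iter P t z y := by
  induction t generalizing y with
  | zero =>
    show (∑ z, iter P 0 x z * P z y) = ∑ z, P x z * iter P 0 z y
    simp only [iter]
    simp [ite_mul, mul_ite, Finset.sum_ite_eq, Finset.sum_ite_eq']
  | succ t ih =>
    show ∑ z, iter P (t+1) x z * P z y = _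
    calc ∑ z, iter P (t+1) x z * P z y
        = ∑ z, ∑ w, P x w * (iter P t w z * P z y) := by
          refine Finset.sum_congr rfl fun z _ => ?_
          rw [ih, Finset.sum_mul]
          exact Finset.sum_congr rfl fun w _ => by ring
      _ = ∑ w, ∑ z, P x w * (iter P t w z * P z y) := Finset.sum_comm
      _ = ∑ w, P x w * ∑ z, iter P t w z * P z y := by
          refine Finset.sum_congr rfl fun w _ => by rw [Finset.mul_sum]
      _ = ∑ w, P x w * iter P (t+1) w y := rfl

lemma Eexp_zero (n : ℕ) (β : ℝ) (k : Fin m → Fin m → ℝ) (g : Fin n → Fin m)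
    (σ : Fin n → Bool) (i : Fin m) : Eexp n β k g σ 0 i = Smag n g σ i := by
  unfold Eexp
  simp only [iter]
  simp [ite_mul, Finset.sum_ite_eq]

lemma Eexp_succ (n : ℕ) (β : ℝ) (k : Fin m → Fin m → ℝ) (g : Fin n → Fin m)
    (σ : Fin n → Bool) (t : ℕ) (i : Fin m) :
    Eexp n β k g σ (t+1) i = (1 / n) * ∑ v,
      (rp β (meanField n k g σ v) * Eexp n β k g (Function.update σ v true) t i
        + rm β (meanField n k g σ v) * Eexp n β k g (Function.update σ v false) t i) := by
  have step1 : Eexp n β k g σ (t+1) i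
      = ∑ z, glauber n β k g σ z * Eexp n β k g z t i := by
    unfold Eexp
    calc ∑ σ', iter (glauber n β k g) (t+1) σ σ' * Smag n g σ' i
        = ∑ σ', ∑ z, glauber n β k g σ z * (iter (glauber n β k g) t z σ' * Smag n g σ' i) := by
          refine Finset.sum_congr rfl fun σ' _ => ?_
          rw [iter_succ_left, Finset.sum_mul]
          exact Finset.sum_congr rfl fun z _ => by ring
      _ = ∑ z, ∑ σ', glauber n β k g σ z * (iter (glauber n β k g) t z σ' * Smag n g σ' i) :=
          Finset.sum_comm
      _ = ∑ z, glauber n β k g σ z * ∑ σ', iter (glauber n β k g) t z σ' * Smag n g σ' i := by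
          refine Finset.sum_congr rfl fun z _ => by rw [Finset.mul_sum]
  rw [step1]
  calc ∑ z, glauber n β k g σ z * Eexp n β k g z t i
      = (1 / n) * ∑ z, (∑ v, ((if z = Function.update σ v true then rp β (meanField n k g σ v) else 0)
          + (if z = Function.update σ v false then rm β (meanField n k g σ v) else 0)))
            * Eexp n β k g z t i := by
        rw [Finset.mul_sum]
        refine Finset.sum_congr rfl fun z _ => ?_
        rw [glauber]; ring
    _ = (1 / n) * ∑ z, ∑ v,
          ((if z = Function.update σ v true then rp β (meanField n k g σ v) else 0)
              * Eexp n β k g z t i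
            + (if z = Function.update σ v false then rm β (meanField n k g σ v) else 0)
              * Eexp n β k g z t i) := by
        congr 1
        refine Finset.sum_congr rfl fun z _ => ?_
        rw [Finset.sum_mul]
        exact Finset.sum_congr rfl fun v _ => by ring
    _ = (1 / n) * ∑ v, ∑ z,
          ((if z = Function.update σ v true then rp β (meanField n k g σ v) else 0)
              * Eexp n β k g z t i
            + (if z = Function.update σ v false then rm β (meanField n k g σ v) else 0)
              * Eexp n β k g z t i) := by
        rw [Finset.sum_comm]
    _ = (1 / n) * ∑ v,
          (rp β (meanField n k g σ v) * Eexp n β k g (Function.update σ v true) t i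
            + rm β (meanField n k g σ v) * Eexp n β k g (Function.update σ v false) t i) := by
        congr 1
        refine Finset.sum_congr rfl fun v _ => ?_
        rw [Finset.sum_add_distrib]
        simp [ite_mul, Finset.sum_ite_eq', Finset.sum_ite_eq]


/-- pointwise order on configurations. -/
def Ord {n : ℕ} (σ τ : Fin n → Bool) : Prop := ∀ v, spin (τ v) ≤ spin (σ v)

lemma spin_le_spin {b c : Bool} : spin b ≤ spin c ↔ (b = true → c = true) := by
  cases b <;> cases c <;> simp [spin] <;> norm_num

lemma Ord.refl {n : ℕ} (σ : Fin n → Bool) : Ord σ σ := fun v => le_rfl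

lemma Ord.update {n : ℕ} {σ τ : Fin n → Bool} (h : Ord σ τ) (v : Fin n) (b : Bool) :
    Ord (Function.update σ v b) (Function.update τ v b) := by
  intro w
  by_cases hw : w = v
  · subst hw; rw [Function.update_self, Function.update_self]
  · rw [Function.update_of_ne hw, Function.update_of_ne hw]; exact h w

lemma Ord.update_le {n : ℕ} (σ : Fin n → Bool) (v : Fin n) :
    Ord (Function.update σ v true) (Function.update σ v false) := by
  intro w
  by_cases hw : w = v
  · subst hw; rw [Function.update_self, Function.update_self]
    norm_num [spin]
  · rw [Function.update_of_ne hw, Function.update_of_ne hw]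

lemma Ord.update_cross {n : ℕ} {σ τ : Fin n → Bool} (h : Ord σ τ) (v : Fin n) :
    Ord (Function.update σ v true) (Function.update τ v false) :=
  fun w => le_trans ((Ord.update_le τ v) w) ((h.update v true) w)

lemma spin_bounds (b : Bool) : -1 ≤ spin b ∧ spin b ≤ 1 := by
  cases b <;> norm_num [spin]

lemma mf_mono {n : ℕ} (k : Fin m → Fin m → ℝ) (g : Fin n → Fin m)
    (hk : ∀ i j, 0 ≤ k i j) {σ τ : Fin n → Bool} (h : Ord σ τ) (v : Fin n) :
    meanField n k g τ v ≤ meanField n k g σ v := by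
  apply Finset.sum_le_sum
  intro w _
  have hkn : 0 ≤ k (g v) (g w) / n := div_nonneg (hk _ _) (Nat.cast_nonneg n)
  exact mul_le_mul_of_nonneg_left (h w) hkn

/-- Lemma A: monotonicity of the expected magnetization in the initial state. -/
lemma Eexp_mono (n : ℕ) (β : ℝ) (k : Fin m → Fin m → ℝ) (g : Fin n → Fin m)
    (hβ : 0 ≤ β) (hk : ∀ i j, 0 ≤ k i j) :
    ∀ t : ℕ, ∀ σ τ : Fin n → Bool, Ord σ τ → ∀ i,
      Eexp n β k g τ t i ≤ Eexp n β k g σ t i := by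
  intro t
  induction t with
  | zero =>
    intro σ τ h i
    rw [Eexp_zero, Eexp_zero, Smag, Smag]
    have : (0:ℝ) ≤ 1 / n := by positivity
    apply mul_le_mul_of_nonneg_left _ this
    exact Finset.sum_le_sum fun v _ => h v
  | succ t ih =>
    intro σ τ h i
    rw [Eexp_succ, Eexp_succ]
    have : (0:ℝ) ≤ 1 / n := by positivity
    apply mul_le_mul_of_nonneg_left _ this
    apply Finset.sum_le_sum
    intro v _
    set rσ := rp β (meanField n k g σ v) with hrσ
    set rτ := rp β (meanField n k g τ v) with hrτ
    set A := Eexp n β k g (Function.update σ v true) t i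
    set B := Eexp n β k g (Function.update σ v false) t i
    set A' := Eexp n β k g (Function.update τ v true) t i
    set B' := Eexp n β k g (Function.update τ v false) t i
    have hrm : rm β (meanField n k g σ v) = 1 - rσ := rm_eq β _
    have hrm' : rm β (meanField n k g τ v) = 1 - rτ := rm_eq β _
    rw [hrm, hrm']
    have h1 : A' ≤ A := ih _ _ (h.update v true) i
    have h2 : B' ≤ B := ih _ _ (h.update v false) i
    have h3 : B' ≤ A := ih _ _ (h.update_cross v) i
    have hr1 : rτ ≤ rσ := rp_mono hβ (mf_mono k g hk h v)
    have hr2 : 0 ≤ rτ := rp_nonneg β _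
    have hr3 : rσ ≤ 1 := by
      have := rm_nonneg β (meanField n k g σ v); rw [hrm] at this; linarith
    nlinarith [mul_nonneg hr2 (sub_nonneg.2 h1), mul_nonneg (sub_nonneg.2 hr1) (sub_nonneg.2 h3),
      mul_nonneg (sub_nonneg.2 hr3) (sub_nonneg.2 h2)]

/-- action of `Q` on (column) vectors. -/
noncomputable def QA (n : ℕ) (β : ℝ) (p : Fin m → ℝ) (k : Fin m → Fin m → ℝ)
    (x : Fin m → ℝ) : Fin m → ℝ :=
  fun i => ∑ j, Qmat n β p k i j * x j

lemma Qmat_apply (n : ℕ) (β : ℝ) (p : Fin m → ℝ) (k : Fin m → Fin m → ℝ) (i j : Fin m) :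
    Qmat n β p k i j = (1 - 1 / (n : ℝ)) * (if i = j then 1 else 0) + (β / n) * (p i * k i j) := by
  simp [Qmat, Matrix.add_apply, Matrix.smul_apply, Matrix.one_apply, smul_eq_mul]

lemma Qmat_nonneg {n : ℕ} {β : ℝ} {p : Fin m → ℝ} {k : Fin m → Fin m → ℝ}
    (hn : 0 < n) (hβ : 0 ≤ β) (hp : ∀ i, 0 ≤ p i) (hk : ∀ i j, 0 ≤ k i j) (i j : Fin m) :
    0 ≤ Qmat n β p k i j := by
  rw [Qmat_apply]
  have h1 : (1:ℝ) ≤ n := by exact_mod_cast hn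
  have : (1:ℝ)/n ≤ 1 := by
    rw [div_le_one (by linarith)]; exact h1
  have h2 : (0:ℝ) ≤ β / n := by positivity
  have h3 := mul_nonneg (hp i) (hk i j)
  have h4 : (0:ℝ) ≤ β / n * (p i * k i j) := mul_nonneg h2 h3
  rw [one_div] at this
  by_cases hij : i = j
  · subst hij
    have h5 : 0 ≤ 1 - (n:ℝ)⁻¹ := by linarith
    rw [one_div]
    simp only [if_pos rfl]
    norm_num
    nlinarith
  · simp only [if_neg hij, mul_zero, zero_add]; exact h4

lemma QA_expand (n : ℕ) (β : ℝ) (p : Fin m → ℝ) (k : Fin m → Fin m → ℝ)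
    (x : Fin m → ℝ) (i : Fin m) :
    QA n β p k x i = (1 - 1 / (n : ℝ)) * x i + (β / n) * (p i * ∑ j, k i j * x j) := by
  unfold QA
  rw [Finset.sum_congr rfl (fun j _ => by rw [Qmat_apply, add_mul]), Finset.sum_add_distrib]
  congr 1
  · have hterm : ∀ j, ((1 - 1/(n:ℝ)) * (if i = j then 1 else 0)) * x j
        = if i = j then (1 - 1/(n:ℝ)) * x j else 0 := by
      intro j; by_cases h : i = j <;> simp [h]
    rw [Finset.sum_congr rfl (fun j _ => hterm j),
      Finset.sum_ite_eq univ i (fun j => (1 - 1/(n:ℝ)) * x j)]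
    simp
  · rw [Finset.mul_sum, Finset.mul_sum]
    exact Finset.sum_congr rfl fun j _ => by ring

lemma QA_mono {n : ℕ} {β : ℝ} {p : Fin m → ℝ} {k : Fin m → Fin m → ℝ}
    (hn : 0 < n) (hβ : 0 ≤ β) (hp : ∀ i, 0 ≤ p i) (hk : ∀ i j, 0 ≤ k i j)
    {x y : Fin m → ℝ} (h : ∀ j, x j ≤ y j) (i : Fin m) :
    QA n β p k x i ≤ QA n β p k y i :=
  Finset.sum_le_sum fun j _ => mul_le_mul_of_nonneg_left (h j) (Qmat_nonneg hn hβ hp hk i j)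

lemma QAit_mono {n : ℕ} {β : ℝ} {p : Fin m → ℝ} {k : Fin m → Fin m → ℝ}
    (hn : 0 < n) (hβ : 0 ≤ β) (hp : ∀ i, 0 ≤ p i) (hk : ∀ i j, 0 ≤ k i j) (t : ℕ)
    {x y : Fin m → ℝ} (h : ∀ j, x j ≤ y j) (i : Fin m) :
    (QA n β p k)^[t] x i ≤ (QA n β p k)^[t] y i := by
  induction t generalizing x y with
  | zero => exact h i
  | succ t ih =>
    rw [Function.iterate_succ_apply, Function.iterate_succ_apply]
    exact ih fun j => QA_mono hn hβ hp hk h j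

lemma QA_sum {n : ℕ} {β : ℝ} {p : Fin m → ℝ} {k : Fin m → Fin m → ℝ}
    {ι : Type*} (s : Finset ι) (f : ι → Fin m → ℝ) :
    QA n β p k (fun j => ∑ v ∈ s, f v j) = fun i => ∑ v ∈ s, QA n β p k (f v) i := by
  funext i
  unfold QA
  rw [Finset.sum_comm]
  exact Finset.sum_congr rfl fun j _ => by rw [Finset.mul_sum]

lemma QA_smul {n : ℕ} {β : ℝ} {p : Fin m → ℝ} {k : Fin m → Fin m → ℝ}
    (c : ℝ) (x : Fin m → ℝ) :
    QA n β p k (fun j => c * x j) = fun i => c * QA n β p k x i := by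
  funext i
  unfold QA
  rw [Finset.mul_sum]
  exact Finset.sum_congr rfl fun j _ => by ring

lemma QA_add {n : ℕ} {β : ℝ} {p : Fin m → ℝ} {k : Fin m → Fin m → ℝ}
    (x y : Fin m → ℝ) :
    QA n β p k (fun j => x j + y j) = fun i => QA n β p k x i + QA n β p k y i := by
  funext i
  unfold QA
  rw [← Finset.sum_add_distrib]
  exact Finset.sum_congr rfl fun j _ => by ring

lemma QAit_sum {n : ℕ} {β : ℝ} {p : Fin m → ℝ} {k : Fin m → Fin m → ℝ}
    {ι : Type*} (t : ℕ) (s : Finset ι) (f : ι → Fin m → ℝ) :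
    (QA n β p k)^[t] (fun j => ∑ v ∈ s, f v j) = fun i => ∑ v ∈ s, (QA n β p k)^[t] (f v) i := by
  induction t generalizing f with
  | zero => simp
  | succ t ih =>
    rw [Function.iterate_succ_apply, QA_sum s f, ih]
    funext i
    exact Finset.sum_congr rfl fun v _ => by rw [Function.iterate_succ_apply]

lemma QAit_smul {n : ℕ} {β : ℝ} {p : Fin m → ℝ} {k : Fin m → Fin m → ℝ}
    (t : ℕ) (c : ℝ) (x : Fin m → ℝ) :
    (QA n β p k)^[t] (fun j => c * x j) = fun i => c * (QA n β p k)^[t] x i := by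
  induction t generalizing x with
  | zero => simp
  | succ t ih =>
    rw [Function.iterate_succ_apply, QA_smul c x, ih]
    funext i
    rw [Function.iterate_succ_apply]

lemma QAit_add {n : ℕ} {β : ℝ} {p : Fin m → ℝ} {k : Fin m → Fin m → ℝ}
    (t : ℕ) (x y : Fin m → ℝ) :
    (QA n β p k)^[t] (fun j => x j + y j) = fun i => (QA n β p k)^[t] x i + (QA n β p k)^[t] y i := by
  induction t generalizing x y with
  | zero => simp
  | succ t ih =>
    rw [Function.iterate_succ_apply, QA_add x y, ih]
    funext i
    rw [Function.iterate_succ_apply, Function.iterate_succ_apply]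


lemma Smag_update (n : ℕ) (g : Fin n → Fin m) (σ : Fin n → Bool) (v : Fin n) (b : Bool)
    (i : Fin m) : Smag n g (Function.update σ v b) i
      = Smag n g σ i + (if g v = i then (spin b - spin (σ v))/n else 0) := by
  have hn : (0:ℝ) < n := by exact_mod_cast v.pos
  unfold Smag
  by_cases hgv : g v = i
  · rw [if_pos hgv]
    have hv : v ∈ Finset.univ.filter (fun w => g w = i) := by simp [hgv]
    have h1 : ∑ w ∈ Finset.univ.filter (fun w => g w = i), spin (Function.update σ v b w)
        = spin b + ∑ w ∈ (Finset.univ.filter (fun w => g w = i)).erase v, spin (σ w) := by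
      rw [← Finset.add_sum_erase _ _ hv, Function.update_self]
      congr 1
      exact Finset.sum_congr rfl fun w hw => by
        rw [Function.update_of_ne (Finset.mem_erase.1 hw).1]
    have h2 : ∑ w ∈ Finset.univ.filter (fun w => g w = i), spin (σ w)
        = spin (σ v) + ∑ w ∈ (Finset.univ.filter (fun w => g w = i)).erase v, spin (σ w) :=
      (Finset.add_sum_erase _ _ hv).symm
    rw [h1, h2]
    field_simp
    ring
  · rw [if_neg hgv, add_zero]
    congr 1
    refine Finset.sum_congr rfl fun w hw => ?_
    have hwi : g w = i := (Finset.mem_filter.1 hw).2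
    have hwv : w ≠ v := fun e => hgv (e ▸ hwi)
    rw [Function.update_of_ne hwv]

lemma Smag_sub (n : ℕ) (g : Fin n → Fin m) (σ τ : Fin n → Bool) (l : Fin m) :
    Smag n g σ l - Smag n g τ l
      = (1/n : ℝ) * ∑ w ∈ Finset.univ.filter (fun w => g w = l), (spin (σ w) - spin (τ w)) := by
  unfold Smag
  rw [Finset.sum_sub_distrib, mul_sub]

lemma mf_diff_le {n : ℕ} {k : Fin m → Fin m → ℝ} {g : Fin n → Fin m}
    (hk : ∀ i j, 0 ≤ k i j) {σ τ : Fin n → Bool} (h : Ord σ τ) (v : Fin n) :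
    meanField n k g σ v - meanField n k g τ v
      ≤ ∑ l, k (g v) l * (Smag n g σ l - Smag n g τ l) := by
  have hδ : ∀ w, 0 ≤ spin (σ w) - spin (τ w) := fun w => sub_nonneg.2 (h w)
  have step1 : meanField n k g σ v - meanField n k g τ v
      = ∑ w ∈ Finset.univ.filter (fun w => w ≠ v),
          (k (g v) (g w) / n) * (spin (σ w) - spin (τ w)) := by
    unfold meanField
    rw [← Finset.sum_sub_distrib]
    exact Finset.sum_congr rfl fun w _ => by ring
  have step2 : ∑ w ∈ Finset.univ.filter (fun w => w ≠ v),
        (k (g v) (g w) / n) * (spin (σ w) - spin (τ w))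
      ≤ ∑ w, (k (g v) (g w) / n) * (spin (σ w) - spin (τ w)) := by
    apply Finset.sum_le_sum_of_subset_of_nonneg (Finset.filter_subset _ _)
    intro w _ _
    exact mul_nonneg (div_nonneg (hk _ _) (Nat.cast_nonneg n)) (hδ w)
  have step3 : ∑ w, (k (g v) (g w) / n) * (spin (σ w) - spin (τ w))
      = ∑ l, k (g v) l * (Smag n g σ l - Smag n g τ l) := by
    rw [← Finset.sum_fiberwise Finset.univ g
      (fun w => (k (g v) (g w) / n) * (spin (σ w) - spin (τ w)))]
    refine Finset.sum_congr rfl fun l _ => ?_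
    rw [Smag_sub, ← mul_assoc, mul_comm (k (g v) l) (1/n : ℝ), mul_assoc, Finset.mul_sum,
      Finset.mul_sum]
    refine Finset.sum_congr rfl fun w hw => ?_
    have hwl : g w = l := (Finset.mem_filter.1 hw).2
    rw [hwl]
    ring
  rw [step1]
  exact le_trans step2 (le_of_eq step3)


/-- the one-step coupling estimate: the coupled average of block-magnetization
differences is dominated by `Q` applied to the current difference. -/
lemma onestep {n : ℕ} {β : ℝ} {p : Fin m → ℝ} {k : Fin m → Fin m → ℝ} {g : Fin n → Fin m}
    (hn : 0 < n) (hβ : 0 ≤ β) (hk : ∀ i j, 0 ≤ k i j)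
    (hg : ∀ i, ((Finset.univ.filter fun v => g v = i).card : ℝ) = n * p i)
    {σ τ : Fin n → Bool} (h : Ord σ τ) (j : Fin m) :
    (1/n : ℝ) * ∑ v, (rp β (meanField n k g τ v)
          * (Smag n g (Function.update σ v true) j - Smag n g (Function.update τ v true) j)
        + (rp β (meanField n k g σ v) - rp β (meanField n k g τ v))
          * (Smag n g (Function.update σ v true) j - Smag n g (Function.update τ v false) j)
        + (1 - rp β (meanField n k g σ v))
          * (Smag n g (Function.update σ v false) j - Smag n g (Function.update τ v false) j))
      ≤ QA n β p k (fun l => Smag n g σ l - Smag n g τ l) j := by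
  have hnR : (0:ℝ) < n := by exact_mod_cast hn
  set ΔS : Fin m → ℝ := fun l => Smag n g σ l - Smag n g τ l with hΔS
  have hsummand : ∀ v : Fin n, (rp β (meanField n k g τ v)
          * (Smag n g (Function.update σ v true) j - Smag n g (Function.update τ v true) j)
        + (rp β (meanField n k g σ v) - rp β (meanField n k g τ v))
          * (Smag n g (Function.update σ v true) j - Smag n g (Function.update τ v false) j)
        + (1 - rp β (meanField n k g σ v))
          * (Smag n g (Function.update σ v false) j - Smag n g (Function.update τ v false) j))
      = ΔS j + (if g v = j then
          (2*(rp β (meanField n k g σ v) - rp β (meanField n k g τ v))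
            - (spin (σ v) - spin (τ v)))/n else 0) := by
    intro v
    rw [Smag_update, Smag_update, Smag_update, Smag_update]
    by_cases hgv : g v = j
    · simp only [if_pos hgv, hΔS, spin_true, spin_false]
      ring
    · simp only [if_neg hgv, hΔS]
      ring
  rw [Finset.sum_congr rfl (fun v _ => hsummand v), Finset.sum_add_distrib, Finset.sum_const,
    Finset.card_univ, Fintype.card_fin, ← Finset.sum_filter, nsmul_eq_mul]
  have hδsum : ∑ v ∈ Finset.univ.filter (fun v => g v = j), (spin (σ v) - spin (τ v))
      = n * ΔS j := by
    have := Smag_sub n g σ τ j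
    rw [hΔS]
    field_simp at this ⊢
    linarith
  have hbound : ∑ v ∈ Finset.univ.filter (fun v => g v = j),
      (2*(rp β (meanField n k g σ v) - rp β (meanField n k g τ v))
        - (spin (σ v) - spin (τ v)))/n
      ≤ (n * p j * (β * ∑ l, k j l * ΔS l) - n * ΔS j)/n := by
    rw [← Finset.sum_div]
    have hnum : ∑ v ∈ Finset.univ.filter (fun v => g v = j),
        (2*(rp β (meanField n k g σ v) - rp β (meanField n k g τ v))
          - (spin (σ v) - spin (τ v)))
        ≤ n * p j * (β * ∑ l, k j l * ΔS l) - n * ΔS j := by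
      rw [Finset.sum_sub_distrib, hδsum]
      have hpart : ∑ v ∈ Finset.univ.filter (fun v => g v = j),
          2*(rp β (meanField n k g σ v) - rp β (meanField n k g τ v))
          ≤ n * p j * (β * ∑ l, k j l * ΔS l) := by
        have hper : ∀ v ∈ Finset.univ.filter (fun v => g v = j),
            2*(rp β (meanField n k g σ v) - rp β (meanField n k g τ v))
              ≤ β * ∑ l, k j l * ΔS l := by
          intro v hv
          have hgv : g v = j := (Finset.mem_filter.1 hv).2
          have h1 := rp_lip hβ (mf_mono k g hk h v)
          have h2 : meanField n k g σ v - meanField n k g τ v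
              ≤ ∑ l, k (g v) l * ΔS l := mf_diff_le hk h v
          have h3 : β * (meanField n k g σ v - meanField n k g τ v)
              ≤ β * ∑ l, k (g v) l * ΔS l := mul_le_mul_of_nonneg_left h2 hβ
          have h4 : (∑ l, k (g v) l * ΔS l) = ∑ l, k j l * ΔS l := by rw [hgv]
          calc 2*(rp β (meanField n k g σ v) - rp β (meanField n k g τ v))
              ≤ β * (meanField n k g σ v - meanField n k g τ v) := h1
            _ ≤ β * ∑ l, k (g v) l * ΔS l := h3
            _ = β * ∑ l, k j l * ΔS l := by rw [h4]
        calc ∑ v ∈ Finset.univ.filter (fun v => g v = j),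
            2*(rp β (meanField n k g σ v) - rp β (meanField n k g τ v))
            ≤ ∑ _v ∈ Finset.univ.filter (fun v => g v = j), (β * ∑ l, k j l * ΔS l) :=
              Finset.sum_le_sum hper
          _ = ((Finset.univ.filter (fun v => g v = j)).card : ℝ) * (β * ∑ l, k j l * ΔS l) := by
              rw [Finset.sum_const, nsmul_eq_mul]
          _ = n * p j * (β * ∑ l, k j l * ΔS l) := by rw [hg j]
      linarith
    exact div_le_div_of_nonneg_right hnum hnR.le
  calc (1/n:ℝ) * ((n:ℝ) * ΔS j + ∑ v ∈ Finset.univ.filter (fun v => g v = j),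
        (2*(rp β (meanField n k g σ v) - rp β (meanField n k g τ v))
          - (spin (σ v) - spin (τ v)))/n)
      ≤ (1/n:ℝ) * ((n:ℝ) * ΔS j + (n * p j * (β * ∑ l, k j l * ΔS l) - n * ΔS j)/n) := by
        apply mul_le_mul_of_nonneg_left _ (by positivity)
        linarith [hbound]
    _ = QA n β p k ΔS j := by
        rw [QA_expand]
        field_simp
        ring


lemma QA_comb {n : ℕ} {β : ℝ} {p : Fin m → ℝ} {k : Fin m → Fin m → ℝ} {ι : Type*}
    (s : Finset ι) (c : ℝ) (c1 c2 c3 : ι → ℝ) (d1 d2 d3 : ι → Fin m → ℝ) :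
    QA n β p k (fun l => c * ∑ v ∈ s, (c1 v * d1 v l + c2 v * d2 v l + c3 v * d3 v l))
      = fun i => c * ∑ v ∈ s, (c1 v * QA n β p k (d1 v) i + c2 v * QA n β p k (d2 v) i
          + c3 v * QA n β p k (d3 v) i) := by
  funext i
  unfold QA
  calc ∑ j, Qmat n β p k i j * (c * ∑ v ∈ s, (c1 v * d1 v j + c2 v * d2 v j + c3 v * d3 v j))
      = c * ∑ j, ∑ v ∈ s, Qmat n β p k i j * (c1 v * d1 v j + c2 v * d2 v j + c3 v * d3 v j) := by
        rw [Finset.mul_sum]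
        exact Finset.sum_congr rfl fun j _ => by rw [mul_left_comm, Finset.mul_sum]
    _ = c * ∑ v ∈ s, ∑ j, Qmat n β p k i j * (c1 v * d1 v j + c2 v * d2 v j + c3 v * d3 v j) := by
        rw [Finset.sum_comm]
    _ = c * ∑ v ∈ s, (c1 v * ∑ j, Qmat n β p k i j * d1 v j
          + c2 v * ∑ j, Qmat n β p k i j * d2 v j + c3 v * ∑ j, Qmat n β p k i j * d3 v j) := by
        congr 1
        refine Finset.sum_congr rfl fun v _ => ?_
        rw [Finset.mul_sum, Finset.mul_sum, Finset.mul_sum, ← Finset.sum_add_distrib,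
          ← Finset.sum_add_distrib]
        exact Finset.sum_congr rfl fun j _ => by ring

lemma QAit_comb {n : ℕ} {β : ℝ} {p : Fin m → ℝ} {k : Fin m → Fin m → ℝ} {ι : Type*}
    (t : ℕ) (s : Finset ι) (c : ℝ) (c1 c2 c3 : ι → ℝ) (d1 d2 d3 : ι → Fin m → ℝ) (i : Fin m) :
    (QA n β p k)^[t] (fun l => c * ∑ v ∈ s, (c1 v * d1 v l + c2 v * d2 v l + c3 v * d3 v l)) i
      = c * ∑ v ∈ s, (c1 v * (QA n β p k)^[t] (d1 v) i + c2 v * (QA n β p k)^[t] (d2 v) i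
          + c3 v * (QA n β p k)^[t] (d3 v) i) := by
  induction t generalizing d1 d2 d3 i with
  | zero => simp
  | succ t ih =>
    rw [Function.iterate_succ_apply, QA_comb s c c1 c2 c3 d1 d2 d3,
      ih (fun v => QA n β p k (d1 v)) (fun v => QA n β p k (d2 v)) (fun v => QA n β p k (d3 v)) i]
    rfl

/-- Lemma B: componentwise contraction estimate for ordered initial configurations. -/
lemma Eexp_contract {n : ℕ} {β : ℝ} {p : Fin m → ℝ} {k : Fin m → Fin m → ℝ} {g : Fin n → Fin m}
    (hn : 0 < n) (hβ : 0 ≤ β) (hp : ∀ i, 0 ≤ p i) (hk : ∀ i j, 0 ≤ k i j)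
    (hg : ∀ i, ((Finset.univ.filter fun v => g v = i).card : ℝ) = n * p i) :
    ∀ t : ℕ, ∀ σ τ : Fin n → Bool, Ord σ τ → ∀ i,
      Eexp n β k g σ t i - Eexp n β k g τ t i
        ≤ (QA n β p k)^[t] (fun l => Smag n g σ l - Smag n g τ l) i := by
  intro t
  induction t with
  | zero =>
    intro σ τ h i
    rw [Eexp_zero, Eexp_zero, Function.iterate_zero_apply]
  | succ t ih =>
    intro σ τ h i
    rw [Eexp_succ, Eexp_succ, ← mul_sub, ← Finset.sum_sub_distrib]
    have hv : ∀ v : Fin n,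
        (rp β (meanField n k g σ v) * Eexp n β k g (Function.update σ v true) t i
          + rm β (meanField n k g σ v) * Eexp n β k g (Function.update σ v false) t i)
        - (rp β (meanField n k g τ v) * Eexp n β k g (Function.update τ v true) t i
          + rm β (meanField n k g τ v) * Eexp n β k g (Function.update τ v false) t i)
        ≤ rp β (meanField n k g τ v)
            * (QA n β p k)^[t] (fun l => Smag n g (Function.update σ v true) l
                - Smag n g (Function.update τ v true) l) i
          + (rp β (meanField n k g σ v) - rp β (meanField n k g τ v))
            * (QA n β p k)^[t] (fun l => Smag n g (Function.update σ v true) l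
                - Smag n g (Function.update τ v false) l) i
          + (1 - rp β (meanField n k g σ v))
            * (QA n β p k)^[t] (fun l => Smag n g (Function.update σ v false) l
                - Smag n g (Function.update τ v false) l) i := by
      intro v
      rw [rm_eq, rm_eq]
      have hid : (rp β (meanField n k g σ v) * Eexp n β k g (Function.update σ v true) t i
          + (1 - rp β (meanField n k g σ v)) * Eexp n β k g (Function.update σ v false) t i)
        - (rp β (meanField n k g τ v) * Eexp n β k g (Function.update τ v true) t i
          + (1 - rp β (meanField n k g τ v)) * Eexp n β k g (Function.update τ v false) t i)
        = rp β (meanField n k g τ v)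
            * (Eexp n β k g (Function.update σ v true) t i
              - Eexp n β k g (Function.update τ v true) t i)
          + (rp β (meanField n k g σ v) - rp β (meanField n k g τ v))
            * (Eexp n β k g (Function.update σ v true) t i
              - Eexp n β k g (Function.update τ v false) t i)
          + (1 - rp β (meanField n k g σ v))
            * (Eexp n β k g (Function.update σ v false) t i
              - Eexp n β k g (Function.update τ v false) t i) := by ring
      rw [hid]
      have hc1 : 0 ≤ rp β (meanField n k g τ v) := rp_nonneg β _
      have hc2 : 0 ≤ rp β (meanField n k g σ v) - rp β (meanField n k g τ v) :=
        sub_nonneg.2 (rp_mono hβ (mf_mono k g hk h v))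
      have hc3 : 0 ≤ 1 - rp β (meanField n k g σ v) := by
        have := rm_nonneg β (meanField n k g σ v)
        rw [rm_eq] at this; linarith
      have b1 := ih (Function.update σ v true) (Function.update τ v true) (h.update v true) i
      have b2 := ih (Function.update σ v true) (Function.update τ v false) (h.update_cross v) i
      have b3 := ih (Function.update σ v false) (Function.update τ v false) (h.update v false) i
      exact add_le_add (add_le_add (mul_le_mul_of_nonneg_left b1 hc1)
        (mul_le_mul_of_nonneg_left b2 hc2)) (mul_le_mul_of_nonneg_left b3 hc3)
    calc (1/(n:ℝ)) * ∑ v, ((rp β (meanField n k g σ v)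
            * Eexp n β k g (Function.update σ v true) t i
          + rm β (meanField n k g σ v) * Eexp n β k g (Function.update σ v false) t i)
        - (rp β (meanField n k g τ v) * Eexp n β k g (Function.update τ v true) t i
          + rm β (meanField n k g τ v) * Eexp n β k g (Function.update τ v false) t i))
        ≤ (1/(n:ℝ)) * ∑ v, (rp β (meanField n k g τ v)
            * (QA n β p k)^[t] (fun l => Smag n g (Function.update σ v true) l
                - Smag n g (Function.update τ v true) l) i
          + (rp β (meanField n k g σ v) - rp β (meanField n k g τ v))
            * (QA n β p k)^[t] (fun l => Smag n g (Function.update σ v true) l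
                - Smag n g (Function.update τ v false) l) i
          + (1 - rp β (meanField n k g σ v))
            * (QA n β p k)^[t] (fun l => Smag n g (Function.update σ v false) l
                - Smag n g (Function.update τ v false) l) i) := by
          exact mul_le_mul_of_nonneg_left (Finset.sum_le_sum fun v _ => hv v) (by positivity)
      _ = (QA n β p k)^[t] (fun l => (1/(n:ℝ)) * ∑ v,
            (rp β (meanField n k g τ v)
              * (Smag n g (Function.update σ v true) l - Smag n g (Function.update τ v true) l)
            + (rp β (meanField n k g σ v) - rp β (meanField n k g τ v))
              * (Smag n g (Function.update σ v true) l - Smag n g (Function.update τ v false) l)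
            + (1 - rp β (meanField n k g σ v))
              * (Smag n g (Function.update σ v false) l
                - Smag n g (Function.update τ v false) l))) i := by
          rw [QAit_comb t Finset.univ (1/(n:ℝ))
            (fun v => rp β (meanField n k g τ v))
            (fun v => rp β (meanField n k g σ v) - rp β (meanField n k g τ v))
            (fun v => 1 - rp β (meanField n k g σ v))
            (fun v l => Smag n g (Function.update σ v true) l
              - Smag n g (Function.update τ v true) l)
            (fun v l => Smag n g (Function.update σ v true) l
              - Smag n g (Function.update τ v false) l)
            (fun v l => Smag n g (Function.update σ v false) l
              - Smag n g (Function.update τ v false) l) i]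
      _ ≤ (QA n β p k)^[t] (QA n β p k (fun l => Smag n g σ l - Smag n g τ l)) i := by
          apply QAit_mono hn hβ hp hk t (fun j => ?_) i
          exact onestep hn hβ hk hg h j
      _ = (QA n β p k)^[t+1] (fun l => Smag n g σ l - Smag n g τ l) i := by
          rw [Function.iterate_succ_apply]


@[simp] lemma spin_not (b : Bool) : spin (!b) = -spin b := by cases b <;> simp

lemma not_funext_iff {n : ℕ} (f h : Fin n → Bool) :
    ((fun w => !f w) = fun w => !h w) ↔ f = h := by
  constructor
  · intro he
    funext w
    have := congrFun he w
    simpa using this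
  · intro he; rw [he]

lemma Smag_not {n : ℕ} (g : Fin n → Fin m) (σ : Fin n → Bool) (i : Fin m) :
    Smag n g (fun v => !σ v) i = -Smag n g σ i := by
  unfold Smag
  rw [← mul_neg, ← Finset.sum_neg_distrib]
  congr 1
  exact Finset.sum_congr rfl fun v _ => by simp

lemma meanField_not {n : ℕ} (k : Fin m → Fin m → ℝ) (g : Fin n → Fin m) (σ : Fin n → Bool)
    (v : Fin n) : meanField n k g (fun w => !σ w) v = -meanField n k g σ v := by
  unfold meanField
  rw [← Finset.sum_neg_distrib]
  exact Finset.sum_congr rfl fun w _ => by rw [spin_not]; ring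

lemma rp_neg (β s : ℝ) : rp β (-s) = rm β s := by
  unfold rp rm
  rw [mul_neg, neg_neg, add_comm]

lemma rm_neg (β s : ℝ) : rm β (-s) = rp β s := by
  unfold rp rm
  rw [mul_neg, neg_neg, add_comm]

lemma update_not {n : ℕ} (σ : Fin n → Bool) (v : Fin n) (b : Bool) :
    Function.update (fun w => !σ w) v b = fun w => !(Function.update σ v (!b) w) := by
  funext w
  by_cases hw : w = v
  · subst hw; rw [Function.update_self, Function.update_self]; simp
  · rw [Function.update_of_ne hw, Function.update_of_ne hw]

lemma glauber_not {n : ℕ} (β : ℝ) (k : Fin m → Fin m → ℝ) (g : Fin n → Fin m)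
    (σ σ' : Fin n → Bool) :
    glauber n β k g (fun v => !σ v) (fun v => !σ' v) = glauber n β k g σ σ' := by
  unfold glauber
  congr 1
  refine Finset.sum_congr rfl fun v _ => ?_
  rw [meanField_not, rp_neg, rm_neg]
  have c1 : ((fun w => !σ' w) = Function.update (fun w => !σ w) v true) ↔
      (σ' = Function.update σ v false) := by
    rw [update_not]
    exact not_funext_iff σ' (Function.update σ v false)
  have c2 : ((fun w => !σ' w) = Function.update (fun w => !σ w) v false) ↔
      (σ' = Function.update σ v true) := by
    rw [update_not]
    exact not_funext_iff σ' (Function.update σ v true)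
  rw [if_congr c1 rfl rfl, if_congr c2 rfl rfl]
  rw [add_comm]

/-- the negation equivalence on configurations. -/
def negEquiv (n : ℕ) : (Fin n → Bool) ≃ (Fin n → Bool) where
  toFun f := fun v => !f v
  invFun f := fun v => !f v
  left_inv f := by funext v; simp
  right_inv f := by funext v; simp

lemma iter_not {n : ℕ} (β : ℝ) (k : Fin m → Fin m → ℝ) (g : Fin n → Fin m) (t : ℕ)
    (σ σ' : Fin n → Bool) :
    iter (glauber n β k g) t (fun v => !σ v) (fun v => !σ' v)
      = iter (glauber n β k g) t σ σ' := by
  induction t generalizing σ' with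
  | zero =>
    show (if _ then (1:ℝ) else 0) = (if _ then (1:ℝ) else 0)
    rw [if_congr (not_funext_iff σ σ') rfl rfl]
  | succ t ih =>
    show (∑ z, iter (glauber n β k g) t (fun v => !σ v) z * glauber n β k g z (fun v => !σ' v)) = _
    rw [← Equiv.sum_comp (negEquiv n) (fun z =>
      iter (glauber n β k g) t (fun v => !σ v) z * glauber n β k g z (fun v => !σ' v))]
    refine Finset.sum_congr rfl fun z _ => ?_
    show iter (glauber n β k g) t (fun v => !σ v) (fun v => !z v)
        * glauber n β k g (fun v => !z v) (fun v => !σ' v) = _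
    rw [ih, glauber_not]

lemma Eexp_not {n : ℕ} (β : ℝ) (k : Fin m → Fin m → ℝ) (g : Fin n → Fin m) (t : ℕ)
    (σ : Fin n → Bool) (i : Fin m) :
    Eexp n β k g (fun v => !σ v) t i = -Eexp n β k g σ t i := by
  unfold Eexp
  rw [← Equiv.sum_comp (negEquiv n) (fun σ' =>
    iter (glauber n β k g) t (fun v => !σ v) σ' * Smag n g σ' i), ← Finset.sum_neg_distrib]
  refine Finset.sum_congr rfl fun σ' _ => ?_
  show iter (glauber n β k g) t (fun v => !σ v) (fun v => !σ' v)
      * Smag n g (fun v => !σ' v) i = _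
  rw [iter_not, Smag_not]
  ring


section Perm

variable {n : ℕ} (e : Fin n ≃ Fin n)

lemma Smag_perm (g : Fin n → Fin m) (hge : ∀ v, g (e v) = g v) (σ : Fin n → Bool) (i : Fin m) :
    Smag n g (fun v => σ (e v)) i = Smag n g σ i := by
  unfold Smag
  congr 1
  refine Finset.sum_equiv e (fun v => ?_) (fun v _ => rfl)
  simp [hge v]

lemma meanField_perm (k : Fin m → Fin m → ℝ) (g : Fin n → Fin m) (hge : ∀ v, g (e v) = g v)
    (σ : Fin n → Bool) (v : Fin n) :
    meanField n k g (fun w => σ (e w)) v = meanField n k g σ (e v) := by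
  unfold meanField
  refine Finset.sum_equiv e (fun w => ?_) (fun w _ => ?_)
  · simp only [Finset.mem_filter, Finset.mem_univ, true_and]
    exact not_congr ⟨fun hw => hw ▸ rfl, fun hw => e.injective hw⟩
  · rw [hge v, hge w]

lemma update_perm (σ : Fin n → Bool) (v : Fin n) (b : Bool) :
    Function.update (fun w => σ (e w)) v b = fun w => Function.update σ (e v) b (e w) := by
  funext w
  by_cases hw : w = v
  · subst hw; rw [Function.update_self, Function.update_self]
  · rw [Function.update_of_ne hw, Function.update_of_ne (fun hc => hw (e.injective hc))]

lemma comp_funext_iff (f h : Fin n → Bool) :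
    ((fun w => f (e w)) = fun w => h (e w)) ↔ f = h := by
  constructor
  · intro he
    funext w
    have := congrFun he (e.symm w)
    simpa using this
  · intro he; rw [he]

lemma glauber_perm (β : ℝ) (k : Fin m → Fin m → ℝ) (g : Fin n → Fin m)
    (hge : ∀ v, g (e v) = g v) (σ σ' : Fin n → Bool) :
    glauber n β k g (fun v => σ (e v)) (fun v => σ' (e v)) = glauber n β k g σ σ' := by
  unfold glauber
  congr 1
  rw [← Equiv.sum_comp e (fun v =>
    (if σ' = Function.update σ v true then rp β (meanField n k g σ v) else 0)
      + (if σ' = Function.update σ v false then rm β (meanField n k g σ v) else 0))]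
  refine Finset.sum_congr rfl fun v _ => ?_
  rw [meanField_perm e k g hge]
  have c1 : ((fun w => σ' (e w)) = Function.update (fun w => σ (e w)) v true) ↔
      (σ' = Function.update σ (e v) true) := by
    rw [update_perm]
    exact comp_funext_iff e σ' (Function.update σ (e v) true)
  have c2 : ((fun w => σ' (e w)) = Function.update (fun w => σ (e w)) v false) ↔
      (σ' = Function.update σ (e v) false) := by
    rw [update_perm]
    exact comp_funext_iff e σ' (Function.update σ (e v) false)
  rw [if_congr c1 rfl rfl, if_congr c2 rfl rfl]

/-- the configuration-permutation equivalence induced by `e`. -/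
def permEquiv : (Fin n → Bool) ≃ (Fin n → Bool) where
  toFun f := fun v => f (e v)
  invFun f := fun v => f (e.symm v)
  left_inv f := by funext v; simp
  right_inv f := by funext v; simp

lemma iter_perm (β : ℝ) (k : Fin m → Fin m → ℝ) (g : Fin n → Fin m)
    (hge : ∀ v, g (e v) = g v) (t : ℕ) (σ σ' : Fin n → Bool) :
    iter (glauber n β k g) t (fun v => σ (e v)) (fun v => σ' (e v))
      = iter (glauber n β k g) t σ σ' := by
  induction t generalizing σ' with
  | zero =>
    show (if _ then (1:ℝ) else 0) = (if _ then (1:ℝ) else 0)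
    rw [if_congr (comp_funext_iff e σ σ') rfl rfl]
  | succ t ih =>
    show (∑ z, iter (glauber n β k g) t (fun v => σ (e v)) z
        * glauber n β k g z (fun v => σ' (e v))) = _
    rw [← Equiv.sum_comp (permEquiv e) (fun z =>
      iter (glauber n β k g) t (fun v => σ (e v)) z * glauber n β k g z (fun v => σ' (e v)))]
    refine Finset.sum_congr rfl fun z _ => ?_
    show iter (glauber n β k g) t (fun v => σ (e v)) (fun v => z (e v))
        * glauber n β k g (fun v => z (e v)) (fun v => σ' (e v)) = _
    rw [ih, glauber_perm e β k g hge]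

lemma Eexp_perm (β : ℝ) (k : Fin m → Fin m → ℝ) (g : Fin n → Fin m)
    (hge : ∀ v, g (e v) = g v) (t : ℕ) (σ : Fin n → Bool) (i : Fin m) :
    Eexp n β k g (fun v => σ (e v)) t i = Eexp n β k g σ t i := by
  unfold Eexp
  rw [← Equiv.sum_comp (permEquiv e) (fun σ' =>
    iter (glauber n β k g) t (fun v => σ (e v)) σ' * Smag n g σ' i)]
  refine Finset.sum_congr rfl fun σ' _ => ?_
  show iter (glauber n β k g) t (fun v => σ (e v)) (fun v => σ' (e v))
      * Smag n g (fun v => σ' (e v)) i = _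
  rw [iter_perm e β k g hge, Smag_perm e g hge]

end Perm


lemma exists_shuffle {α γ : Type*} [Fintype α] [DecidableEq α] [DecidableEq γ]
    (c c' : α → γ)
    (h : ∀ y, (Finset.univ.filter fun v => c v = y).card
      = (Finset.univ.filter fun v => c' v = y).card) :
    ∃ e : α ≃ α, ∀ v, c (e v) = c' v := by
  have hcard : ∀ y : γ, Fintype.card {a // c' a = y} = Fintype.card {a // c a = y} := by
    intro y
    rw [Fintype.card_subtype, Fintype.card_subtype, h y]
  let ψ : ∀ y, {a // c' a = y} ≃ {a // c a = y} := fun y => Fintype.equivOfCardEq (hcard y)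
  refine ⟨((Equiv.sigmaFiberEquiv c').symm.trans
    (Equiv.sigmaCongrRight ψ)).trans (Equiv.sigmaFiberEquiv c), fun v => ?_⟩
  have key : ∀ (x : Σ y, {a // c a = y}), c ((Equiv.sigmaFiberEquiv c) x) = x.1 :=
    fun x => x.2.2
  simp only [Equiv.trans_apply]
  rw [key]
  rfl

/-- existence of a `g`-preserving shuffle turning the global flip of `σ` into a
configuration dominated by `σ`, provided all block magnetizations of `σ` are nonnegative. -/
lemma exists_flip_companion {n : ℕ} (g : Fin n → Fin m) (σ : Fin n → Bool)
    (h : ∀ i, 0 ≤ Smag n g σ i) :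
    ∃ τ : Fin n → Bool, Ord σ τ ∧
      ∃ e : Fin n ≃ Fin n, (∀ v, g (e v) = g v) ∧ (∀ v, (!σ (e v)) = τ v) := by
  classical
  set G : Fin m → Finset (Fin n) := fun i => Finset.univ.filter (fun v => g v = i) with hG
  set T : Fin m → Finset (Fin n) := fun i => (G i).filter (fun v => σ v = true) with hT
  set F : Fin m → Finset (Fin n) := fun i => (G i).filter (fun v => σ v = false) with hF
  have hTF : ∀ i, (T i).card + (F i).card = (G i).card := by
    intro i
    simp only [hT, hF]
    have : ∀ v, (σ v = false) ↔ ¬ (σ v = true) := by intro v; cases σ v <;> simp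
    rw [Finset.filter_congr (fun v _ => this v)]
    exact Finset.card_filter_add_card_filter_not _
  have hspinsum : ∀ i, ∑ v ∈ G i, spin (σ v) = ((T i).card : ℝ) - ((F i).card : ℝ) := by
    intro i
    rw [← Finset.sum_filter_add_sum_filter_not (G i) (fun v => σ v = true) (fun v => spin (σ v))]
    have h1 : ∑ v ∈ (G i).filter (fun v => σ v = true), spin (σ v) = ((T i).card : ℝ) := by
      rw [hT, Finset.sum_congr rfl (fun v hv => by
        rw [(Finset.mem_filter.1 hv).2, spin_true]), Finset.sum_const, nsmul_eq_mul, mul_one]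
    have h2 : ∑ v ∈ (G i).filter (fun v => ¬ σ v = true), spin (σ v) = -((F i).card : ℝ) := by
      have hpred : ∀ v ∈ G i, (¬ σ v = true) ↔ (σ v = false) := by
        intro v _; cases σ v <;> simp
      simp only [hF]
      rw [Finset.filter_congr hpred, Finset.sum_congr rfl (fun v hv => by
        rw [(Finset.mem_filter.1 hv).2, spin_false]), Finset.sum_const, nsmul_eq_mul, mul_neg_one]
    rw [h1, h2]
    ring
  have hcardle : ∀ i, (F i).card ≤ (T i).card := by
    intro i
    by_cases hn0 : n = 0
    · subst hn0
      have hGe : G i = ∅ := Finset.eq_empty_of_forall_notMem (fun v _ => Fin.elim0 v)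
      simp only [hT, hF, hGe]
      simp
    have hnR : (0:ℝ) < n := by
      have : 0 < n := Nat.pos_of_ne_zero hn0
      exact_mod_cast this
    have hs := h i
    unfold Smag at hs
    have hs2 : (0:ℝ) ≤ (1/n : ℝ) * ∑ v ∈ G i, spin (σ v) := hs
    rw [hspinsum i] at hs2
    have : (0:ℝ) ≤ ((T i).card : ℝ) - ((F i).card : ℝ) := by
      by_contra hc
      push_neg at hc
      nlinarith [mul_pos (show (0:ℝ) < 1/(n:ℝ) by positivity)
        (show (0:ℝ) < ((F i).card : ℝ) - ((T i).card : ℝ) by linarith)]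
    exact_mod_cast sub_nonneg.1 this
  choose R hRsub hRcard using fun i => Finset.exists_subset_card_eq (hcardle i)
  set τ : Fin n → Bool := fun v => decide (v ∈ R (g v)) with hτ
  have hmemT : ∀ {i v}, v ∈ T i → g v = i ∧ σ v = true := by
    intro i v hv
    have h1 := Finset.mem_filter.1 hv
    have h2 := Finset.mem_filter.1 h1.1
    exact ⟨h2.2, h1.2⟩
  have hOrd : Ord σ τ := by
    intro v
    rw [spin_le_spin]
    intro hτv
    rw [hτ] at hτv
    have hvR : v ∈ R (g v) := of_decide_eq_true hτv
    exact (hmemT (hRsub (g v) hvR)).2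
  refine ⟨τ, hOrd, ?_⟩
  -- fiber counts for the pair maps
  have hfib : ∀ y : Fin m × Bool,
      (Finset.univ.filter fun v => (g v, !σ v) = y).card
        = (Finset.univ.filter fun v => (g v, τ v) = y).card := by
    rintro ⟨i, b⟩
    have hRsubG : R i ⊆ G i := fun v hv => Finset.mem_filter.1 (hRsub i hv) |>.1
    cases b
    · -- b = false : flipped-σ false ↔ σ true; τ false ↔ v ∉ R (g v)
      have e1 : (Finset.univ.filter fun v => (g v, !σ v) = (i, false)) = T i := by
        ext v
        simp only [Finset.mem_filter, Finset.mem_univ, true_and, Prod.mk.injEq, hT, hG]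
        cases hσv : σ v <;> simp
      have e2 : (Finset.univ.filter fun v => (g v, τ v) = (i, false)) = G i \ R i := by
        ext v
        simp only [Finset.mem_filter, Finset.mem_univ, true_and, Prod.mk.injEq, Finset.mem_sdiff,
          hτ, hG, decide_eq_false_iff_not]
        constructor
        · rintro ⟨h1, h2⟩
          exact ⟨h1, by rwa [h1] at h2⟩
        · rintro ⟨h1, h2⟩
          exact ⟨h1, by rwa [h1]⟩
      rw [e1, e2, Finset.card_sdiff_of_subset hRsubG, hRcard i]
      have := hTF i
      omega
    · -- b = true
      have e1 : (Finset.univ.filter fun v => (g v, !σ v) = (i, true)) = F i := by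
        ext v
        simp only [Finset.mem_filter, Finset.mem_univ, true_and, Prod.mk.injEq, hF, hG]
        cases hσv : σ v <;> simp
      have e2 : (Finset.univ.filter fun v => (g v, τ v) = (i, true)) = R i := by
        ext v
        simp only [Finset.mem_filter, Finset.mem_univ, true_and, Prod.mk.injEq, hτ,
          decide_eq_true_eq]
        constructor
        · rintro ⟨h1, h2⟩
          rwa [h1] at h2
        · intro hv
          have := (hmemT (hRsub i hv)).1
          exact ⟨this, by rwa [this]⟩
      rw [e1, e2, hRcard i]
  obtain ⟨e, he⟩ := exists_shuffle (fun v => (g v, !σ v)) (fun v => (g v, τ v)) hfib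
  refine ⟨e, fun v => ?_, fun v => ?_⟩
  · exact (Prod.mk.injEq _ _ _ _ ▸ he v : _ ∧ _).1
  · exact (Prod.mk.injEq _ _ _ _ ▸ he v : _ ∧ _).2


section LinAlg

variable {n : ℕ} {β : ℝ} {p : Fin m → ℝ} {k : Fin m → Fin m → ℝ}

/-- the symmetrized matrix `M = D⁻¹ Q D`, `D = diag (√p)`, acting on vectors. -/
noncomputable def MA (n : ℕ) (β : ℝ) (p : Fin m → ℝ) (k : Fin m → Fin m → ℝ)
    (z : Fin m → ℝ) : Fin m → ℝ :=
  fun i => ∑ j, (Qmat n β p k i j * Real.sqrt (p j) / Real.sqrt (p i)) * z j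

lemma sqrt_p_pos (hp : ∀ i, 0 < p i) (i : Fin m) : 0 < Real.sqrt (p i) :=
  Real.sqrt_pos.2 (hp i)

lemma M_symm (hp : ∀ i, 0 < p i) (hks : ∀ i j, k i j = k j i) (i j : Fin m) :
    Qmat n β p k i j * Real.sqrt (p j) / Real.sqrt (p i)
      = Qmat n β p k j i * Real.sqrt (p i) / Real.sqrt (p j) := by
  rw [Qmat_apply, Qmat_apply]
  have hpi := sqrt_p_pos hp i
  have hpj := sqrt_p_pos hp j
  have hi : Real.sqrt (p i) * Real.sqrt (p i) = p i := Real.mul_self_sqrt (hp i).le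
  have hj : Real.sqrt (p j) * Real.sqrt (p j) = p j := Real.mul_self_sqrt (hp j).le
  by_cases hij : i = j
  · subst hij; rw [if_pos rfl]
  · rw [if_neg hij, if_neg (Ne.symm hij), div_eq_div_iff hpi.ne' hpj.ne']
    linear_combination ((β/(n:ℝ)) * (p i * k i j)) * hj - ((β/(n:ℝ)) * (p j * k j i)) * hi
      + ((β/(n:ℝ)) * (p i * p j)) * (hks i j)

lemma M_nonneg (hn : 0 < n) (hβ : 0 ≤ β) (hp : ∀ i, 0 < p i) (hk : ∀ i j, 0 ≤ k i j)
    (i j : Fin m) : 0 ≤ Qmat n β p k i j * Real.sqrt (p j) / Real.sqrt (p i) :=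
  div_nonneg (mul_nonneg (Qmat_nonneg hn hβ (fun i => (hp i).le) hk i j) (Real.sqrt_nonneg _))
    (Real.sqrt_nonneg _)

variable {a : Fin m → ℝ} {ρn : ℝ}

/-- the right Perron eigenvector `w i = a i √(p i)` of `M`. -/
lemma M_eigen (hp : ∀ i, 0 < p i) (hks : ∀ i j, k i j = k j i)
    (hρ : ∀ j, ∑ i, a i * Qmat n β p k i j = ρn * a j) (i : Fin m) :
    ∑ j, (Qmat n β p k i j * Real.sqrt (p j) / Real.sqrt (p i)) * (a j * Real.sqrt (p j))
      = ρn * (a i * Real.sqrt (p i)) := by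
  have hpi := sqrt_p_pos hp i
  have hi : Real.sqrt (p i) * Real.sqrt (p i) = p i := Real.mul_self_sqrt (hp i).le
  -- transposed eigen relation, expanded
  have hr : (1 - 1/(n:ℝ)) * a i + (β/(n:ℝ)) * ∑ j, a j * (p j * k j i) = ρn * a i := by
    have hρi := hρ i
    rw [Finset.sum_congr rfl (fun j _ => by rw [Qmat_apply])] at hρi
    have h1 : ∀ j : Fin m, a j * ((1 - 1/(n:ℝ)) * (if j = i then 1 else 0)
        + (β/(n:ℝ)) * (p j * k j i))
        = (if j = i then (1 - 1/(n:ℝ)) * a j else 0) + (β/(n:ℝ)) * (a j * (p j * k j i)) := by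
      intro j; by_cases hj : j = i <;> simp [hj] <;> ring
    rw [Finset.sum_congr rfl (fun j _ => h1 j), Finset.sum_add_distrib,
      Finset.sum_ite_eq' Finset.univ i (fun j => (1 - 1/(n:ℝ)) * a j), ← Finset.mul_sum] at hρi
    simpa using hρi
  have key : ∑ j, Qmat n β p k i j * (p j * a j) = ρn * (p i * a i) := by
    have hQA := QA_expand n β p k (fun j => p j * a j) i
    have hsum : ∑ j, k i j * (p j * a j) = ∑ j, a j * (p j * k j i) :=
      Finset.sum_congr rfl fun j _ => by rw [hks i j]; ring
    calc ∑ j, Qmat n β p k i j * (p j * a j) = QA n β p k (fun j => p j * a j) i := rfl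
      _ = (1 - 1/(n:ℝ)) * (p i * a i) + (β/(n:ℝ)) * (p i * ∑ j, k i j * (p j * a j)) := hQA
      _ = ρn * (p i * a i) := by
          rw [hsum]
          linear_combination (p i) * hr
  calc ∑ j, (Qmat n β p k i j * Real.sqrt (p j) / Real.sqrt (p i)) * (a j * Real.sqrt (p j))
      = ∑ j, (Qmat n β p k i j * (p j * a j)) / Real.sqrt (p i) := by
        refine Finset.sum_congr rfl fun j _ => ?_
        have hj : Real.sqrt (p j) * Real.sqrt (p j) = p j := Real.mul_self_sqrt (hp j).le
        rw [div_mul_eq_mul_div]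
        congr 1
        linear_combination (Qmat n β p k i j * a j) * hj
    _ = (∑ j, Qmat n β p k i j * (p j * a j)) / Real.sqrt (p i) := by rw [Finset.sum_div]
    _ = ρn * (a i * Real.sqrt (p i)) := by
        rw [key, eq_comm, eq_div_iff hpi.ne']
        linear_combination (ρn * a i) * hi

/-- quadratic-form bound: `‖M z‖² ≤ ρ² ‖z‖²`. -/
lemma M_norm (hn : 0 < n) (hβ : 0 ≤ β) (hp : ∀ i, 0 < p i) (hk : ∀ i j, 0 ≤ k i j)
    (hks : ∀ i j, k i j = k j i) (ha : ∀ i, 0 < a i)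
    (hρ : ∀ j, ∑ i, a i * Qmat n β p k i j = ρn * a j) (z : Fin m → ℝ) :
    ∑ i, (MA n β p k z i)^2 ≤ ρn^2 * ∑ i, (z i)^2 := by
  set w : Fin m → ℝ := fun i => a i * Real.sqrt (p i) with hw
  have hwpos : ∀ i, 0 < w i := fun i => mul_pos (ha i) (sqrt_p_pos hp i)
  set M : Fin m → Fin m → ℝ := fun i j => Qmat n β p k i j * Real.sqrt (p j) / Real.sqrt (p i)
    with hM
  set N : Fin m → Fin m → ℝ := fun j l => ∑ i, M i j * M i l with hN
  have hNsymm : ∀ j l, N j l = N l j := fun j l =>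
    Finset.sum_congr rfl fun i _ => mul_comm _ _
  have hNnonneg : ∀ j l, 0 ≤ N j l := fun j l =>
    Finset.sum_nonneg fun i _ => mul_nonneg (M_nonneg hn hβ hp hk i j) (M_nonneg hn hβ hp hk i l)
  have hMw : ∀ i, ∑ l, M i l * w l = ρn * w i := fun i => M_eigen hp hks hρ i
  have hMsymm : ∀ i j, M i j = M j i := fun i j => M_symm hp hks i j
  have hNw : ∀ j, ∑ l, N j l * w l = ρn^2 * w j := by
    intro j
    calc ∑ l, N j l * w l = ∑ l, ∑ i, (M i j * (M i l * w l)) := by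
          refine Finset.sum_congr rfl fun l _ => ?_
          rw [hN, Finset.sum_mul]
          exact Finset.sum_congr rfl fun i _ => by ring
      _ = ∑ i, M i j * ∑ l, M i l * w l := by
          rw [Finset.sum_comm]
          exact Finset.sum_congr rfl fun i _ => by rw [Finset.mul_sum]
      _ = ∑ i, M i j * (ρn * w i) := Finset.sum_congr rfl fun i _ => by rw [hMw i]
      _ = ρn * ∑ i, M j i * w i := by
          rw [Finset.mul_sum]
          exact Finset.sum_congr rfl fun i _ => by rw [hMsymm i j]; ring
      _ = ρn^2 * w j := by rw [hMw j]; ring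
  -- ‖Mz‖² as a quadratic form in N
  have hquadform : ∑ i, (MA n β p k z i)^2 = ∑ j, ∑ l, N j l * (z j * z l) := by
    calc ∑ i, (MA n β p k z i)^2
        = ∑ i, ∑ j, ∑ l, (M i j * z j) * (M i l * z l) := by
          refine Finset.sum_congr rfl fun i _ => ?_
          rw [show (MA n β p k z i) = ∑ j, M i j * z j from rfl, sq, Finset.sum_mul]
          exact Finset.sum_congr rfl fun j _ => by rw [Finset.mul_sum]
      _ = ∑ j, ∑ i, ∑ l, (M i j * z j) * (M i l * z l) := Finset.sum_comm
      _ = ∑ j, ∑ l, ∑ i, (M i j * z j) * (M i l * z l) := by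
          exact Finset.sum_congr rfl fun j _ => Finset.sum_comm
      _ = ∑ j, ∑ l, N j l * (z j * z l) := by
          refine Finset.sum_congr rfl fun j _ => Finset.sum_congr rfl fun l _ => ?_
          rw [hN, Finset.sum_mul]
          exact Finset.sum_congr rfl fun i _ => by ring
  rw [hquadform]
  -- AM-GM per entry
  have hperm : ∀ j l, z j * z l ≤ (z j)^2 * (w l / w j) / 2 + (z l)^2 * (w j / w l) / 2 := by
    intro j l
    have hwj := hwpos j
    have hwl := hwpos l
    have expand : (z j)^2 * (w l / w j) / 2 + (z l)^2 * (w j / w l) / 2 - z j * z l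
        = (z j * w l - z l * w j)^2 / (2 * (w j * w l)) := by
      field_simp
      ring
    have hge : 0 ≤ (z j * w l - z l * w j)^2 / (2 * (w j * w l)) :=
      div_nonneg (sq_nonneg _) (by positivity)
    linarith [expand ▸ hge]
  have hstep : ∑ j, ∑ l, N j l * (z j * z l)
      ≤ ∑ j, ∑ l, N j l * ((z j)^2 * (w l / w j) / 2 + (z l)^2 * (w j / w l) / 2) :=
    Finset.sum_le_sum fun j _ => Finset.sum_le_sum fun l _ =>
      mul_le_mul_of_nonneg_left (hperm j l) (hNnonneg j l)
  refine le_trans hstep (le_of_eq ?_)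
  have ht1 : ∀ j, ∑ l, N j l * ((z j)^2 * (w l / w j) / 2) = ρn^2 * (z j)^2 / 2 := by
    intro j
    have hwj := hwpos j
    calc ∑ l, N j l * ((z j)^2 * (w l / w j) / 2)
        = ((z j)^2 / (2 * w j)) * ∑ l, N j l * w l := by
          rw [Finset.mul_sum]
          refine Finset.sum_congr rfl fun l _ => ?_
          field_simp
      _ = ρn^2 * (z j)^2 / 2 := by
          rw [hNw j]
          field_simp
  have ht2 : ∑ j, ∑ l, N j l * ((z l)^2 * (w j / w l) / 2) = ∑ j, ρn^2 * (z j)^2 / 2 := by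
    rw [Finset.sum_comm]
    refine Finset.sum_congr rfl fun l _ => ?_
    have hwl := hwpos l
    calc ∑ j, N j l * ((z l)^2 * (w j / w l) / 2)
        = ((z l)^2 / (2 * w l)) * ∑ j, N l j * w j := by
          rw [Finset.mul_sum]
          refine Finset.sum_congr rfl fun j _ => ?_
          rw [hNsymm j l]
          field_simp
      _ = ρn^2 * (z l)^2 / 2 := by
          rw [hNw l]
          field_simp
  calc ∑ j, ∑ l, N j l * ((z j)^2 * (w l / w j) / 2 + (z l)^2 * (w j / w l) / 2)
      = ∑ j, ((∑ l, N j l * ((z j)^2 * (w l / w j) / 2))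
          + ∑ l, N j l * ((z l)^2 * (w j / w l) / 2)) := by
        refine Finset.sum_congr rfl fun j _ => ?_
        rw [← Finset.sum_add_distrib]
        exact Finset.sum_congr rfl fun l _ => by ring
    _ = ∑ j, (ρn^2 * (z j)^2 / 2) + ∑ j, ∑ l, N j l * ((z l)^2 * (w j / w l) / 2) := by
        rw [Finset.sum_add_distrib]
        congr 1
        exact Finset.sum_congr rfl fun j _ => ht1 j
    _ = ∑ j, (ρn^2 * (z j)^2 / 2) + ∑ j, (ρn^2 * (z j)^2 / 2) := by rw [ht2]
    _ = ρn^2 * ∑ i, (z i)^2 := by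
        rw [← Finset.sum_add_distrib, Finset.mul_sum]
        exact Finset.sum_congr rfl fun i _ => by ring


lemma rho_nonneg (hm : 0 < m) (hn : 0 < n) (hβ : 0 ≤ β) (hp : ∀ i, 0 < p i)
    (hk : ∀ i j, 0 ≤ k i j) (ha : ∀ i, 0 < a i)
    (hρ : ∀ j, ∑ i, a i * Qmat n β p k i j = ρn * a j) : 0 ≤ ρn := by
  set j : Fin m := ⟨0, hm⟩
  have h1 : 0 ≤ ∑ i, a i * Qmat n β p k i j :=
    Finset.sum_nonneg fun i _ => mul_nonneg (ha i).le
      (Qmat_nonneg hn hβ (fun i => (hp i).le) hk i j)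
  rw [hρ j] at h1
  nlinarith [ha j]

lemma MAit_norm (hm : 0 < m) (hn : 0 < n) (hβ : 0 ≤ β) (hp : ∀ i, 0 < p i)
    (hk : ∀ i j, 0 ≤ k i j) (hks : ∀ i j, k i j = k j i) (ha : ∀ i, 0 < a i)
    (hρ : ∀ j, ∑ i, a i * Qmat n β p k i j = ρn * a j) (t : ℕ) (z : Fin m → ℝ) :
    ∑ i, ((MA n β p k)^[t] z i)^2 ≤ ρn^(2*t) * ∑ i, (z i)^2 := by
  induction t generalizing z with
  | zero => simp
  | succ t ih =>
    rw [Function.iterate_succ_apply]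
    calc ∑ i, ((MA n β p k)^[t] (MA n β p k z) i)^2
        ≤ ρn^(2*t) * ∑ i, (MA n β p k z i)^2 := ih (MA n β p k z)
      _ ≤ ρn^(2*t) * (ρn^2 * ∑ i, (z i)^2) := by
          apply mul_le_mul_of_nonneg_left (M_norm hn hβ hp hk hks ha hρ z)
          exact pow_nonneg (rho_nonneg hm hn hβ hp hk ha hρ) _
      _ = ρn^(2*(t+1)) * ∑ i, (z i)^2 := by ring

lemma QAit_eq_MAit (hp : ∀ i, 0 < p i) (t : ℕ) (x : Fin m → ℝ) (i : Fin m) :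
    (QA n β p k)^[t] x i
      = Real.sqrt (p i) * (MA n β p k)^[t] (fun j => x j / Real.sqrt (p j)) i := by
  induction t generalizing x i with
  | zero =>
    simp only [Function.iterate_zero_apply]
    rw [mul_div_cancel₀]
    exact (sqrt_p_pos hp i).ne'
  | succ t ih =>
    rw [Function.iterate_succ_apply, Function.iterate_succ_apply, ih (QA n β p k x) i]
    have harg : (fun j => QA n β p k x j / Real.sqrt (p j))
        = MA n β p k (fun j => x j / Real.sqrt (p j)) := by
      funext j
      have hpj := sqrt_p_pos hp j
      rw [eq_comm, eq_div_iff hpj.ne']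
      unfold MA QA
      rw [Finset.sum_mul]
      refine Finset.sum_congr rfl fun l _ => ?_
      have hpl := sqrt_p_pos hp l
      field_simp
    rw [harg]

/-- Lemma D: componentwise bound from the symmetrized operator norm. -/
lemma QAit_component_bound (hm : 0 < m) (hn : 0 < n) (hβ : 0 ≤ β) (hp : ∀ i, 0 < p i)
    (hk : ∀ i j, 0 ≤ k i j) (hks : ∀ i j, k i j = k j i) (ha : ∀ i, 0 < a i)
    (hρ : ∀ j, ∑ i, a i * Qmat n β p k i j = ρn * a j) (t : ℕ) (x : Fin m → ℝ) (i : Fin m) :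
    (QA n β p k)^[t] x i
      ≤ Real.sqrt (p i) * (ρn^t * Real.sqrt (∑ j, (x j)^2 / p j)) := by
  have hρ0 : 0 ≤ ρn := rho_nonneg hm hn hβ hp hk ha hρ
  rw [QAit_eq_MAit hp t x i]
  apply mul_le_mul_of_nonneg_left _ (Real.sqrt_nonneg _)
  set u : Fin m → ℝ := (MA n β p k)^[t] (fun j => x j / Real.sqrt (p j)) with hu
  have h1 : u i ≤ Real.sqrt (∑ j, (u j)^2) := by
    have h2 : (u i)^2 ≤ ∑ j, (u j)^2 :=
      Finset.single_le_sum (fun j _ => sq_nonneg (u j)) (Finset.mem_univ i)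
    calc u i ≤ |u i| := le_abs_self _
      _ = Real.sqrt ((u i)^2) := (Real.sqrt_sq_eq_abs _).symm
      _ ≤ Real.sqrt (∑ j, (u j)^2) := Real.sqrt_le_sqrt h2
  have h3 : ∑ j, (u j)^2 ≤ ρn^(2*t) * ∑ j, ((fun j => x j / Real.sqrt (p j)) j)^2 :=
    MAit_norm hm hn hβ hp hk hks ha hρ t _
  have h4 : ∑ j, ((fun j => x j / Real.sqrt (p j)) j)^2 = ∑ j, (x j)^2 / p j := by
    refine Finset.sum_congr rfl fun j _ => ?_
    rw [div_pow, Real.sq_sqrt (hp j).le]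
  calc u i ≤ Real.sqrt (∑ j, (u j)^2) := h1
    _ ≤ Real.sqrt (ρn^(2*t) * ∑ j, (x j)^2 / p j) := by
        apply Real.sqrt_le_sqrt
        rw [← h4]
        exact h3
    _ = ρn^t * Real.sqrt (∑ j, (x j)^2 / p j) := by
        rw [Real.sqrt_mul (by positivity) _]
        congr 1
        rw [show 2*t = t*2 from by ring, pow_mul, Real.sqrt_sq (pow_nonneg hρ0 t)]

/-- Lemma C: the left eigenvector relation for iterates of `QA`. -/
lemma aQAit (hρ : ∀ j, ∑ i, a i * Qmat n β p k i j = ρn * a j) (t : ℕ) (x : Fin m → ℝ) :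
    ∑ i, a i * (QA n β p k)^[t] x i = ρn^t * ∑ i, a i * x i := by
  induction t generalizing x with
  | zero => simp
  | succ t ih =>
    rw [Function.iterate_succ_apply, ih (QA n β p k x)]
    have hstep : ∑ i, a i * QA n β p k x i = ρn * ∑ i, a i * x i := by
      unfold QA
      calc ∑ i, a i * ∑ j, Qmat n β p k i j * x j
          = ∑ i, ∑ j, (a i * Qmat n β p k i j) * x j := by
            refine Finset.sum_congr rfl fun i _ => ?_
            rw [Finset.mul_sum]
            exact Finset.sum_congr rfl fun j _ => by ring
        _ = ∑ j, (∑ i, a i * Qmat n β p k i j) * x j := by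
            rw [Finset.sum_comm]
            exact Finset.sum_congr rfl fun j _ => by rw [Finset.sum_mul]
        _ = ∑ j, (ρn * a j) * x j := Finset.sum_congr rfl fun j _ => by rw [hρ j]
        _ = ρn * ∑ j, a j * x j := by
            rw [Finset.mul_sum]
            exact Finset.sum_congr rfl fun j _ => by ring
    rw [hstep]
    ring

end LinAlg

/-- for `β < β_cr` and any nonnegative starting magnetization,
`0 ≤ E_s[∑ i, a i S_t^{(i)}] ≤ ρ_n^t ∑ i, a i s^{(i)}` and
`0 ≤ E_s[S_t^{(i)}] ≤ √p_i ρ_n^t (∑ j, (s^{(j)})²/p_j)^{1/2}`. -/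
theorem magnetization_expectation_bounds
    (m : ℕ) (p : Fin m → ℝ) (k : Fin m → Fin m → ℝ) (a : Fin m → ℝ)
    (hP : Params m p k) (ha : PFvec m p k a)
    (β : ℝ) (hβ0 : 0 ≤ β) (hβ : β < betaCr p k a)
    (n : ℕ) (hn : 0 < n) (g : Fin n → Fin m) (hg : IsPartition n p g)
    (ρn : ℝ) (hρ : ∀ j, ∑ i, a i * Qmat n β p k i j = ρn * a j) :
    ∀ σ : Fin n → Bool, (∀ i, 0 ≤ Smag n g σ i) → ∀ t : ℕ,
      (0 ≤ ∑ i, a i * Eexp n β k g σ t i ∧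
        ∑ i, a i * Eexp n β k g σ t i ≤ ρn ^ t * ∑ i, a i * Smag n g σ i) ∧
      ∀ i : Fin m,
        0 ≤ Eexp n β k g σ t i ∧
        Eexp n β k g σ t i ≤
          Real.sqrt (p i) * (ρn ^ t * Real.sqrt (∑ j, (Smag n g σ j) ^ 2 / p j)) := by
  intro σ hσ t
  have hp : ∀ i, 0 < p i := hP.hp
  have hpnn : ∀ i, 0 ≤ p i := fun i => (hp i).le
  have hknn : ∀ i j, 0 ≤ k i j := fun i j => (hP.hkpos i j).le
  have hks := hP.hksymm
  have hapos := ha.hpos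
  have hgcard := hg.2
  obtain ⟨τ, hOrd, e, hge, hτ⟩ := exists_flip_companion g σ hσ
  have hτfun : τ = fun v => !σ (e v) := by
    funext v
    rw [← hτ v]
  have hτeq : ∀ i, Eexp n β k g τ t i = - Eexp n β k g σ t i := by
    intro i
    calc Eexp n β k g τ t i = Eexp n β k g (fun v => !σ (e v)) t i := by rw [hτfun]
      _ = Eexp n β k g (fun w => !σ w) t i := Eexp_perm e β k g hge t (fun w => !σ w) i
      _ = - Eexp n β k g σ t i := Eexp_not β k g t σ i
  have hSτ : ∀ l, Smag n g τ l = - Smag n g σ l := by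
    intro l
    calc Smag n g τ l = Smag n g (fun v => !σ (e v)) l := by rw [hτfun]
      _ = Smag n g (fun w => !σ w) l := Smag_perm e g hge (fun w => !σ w) l
      _ = - Smag n g σ l := Smag_not g σ l
  -- nonnegativity of every component
  have hpos : ∀ i, 0 ≤ Eexp n β k g σ t i := by
    intro i
    have h1 : Eexp n β k g τ t i ≤ Eexp n β k g σ t i :=
      Eexp_mono n β k g hβ0 hknn t σ τ hOrd i
    rw [hτeq i] at h1
    linarith
  -- componentwise contraction bound
  have hcomp : ∀ i, Eexp n β k g σ t i ≤ (QA n β p k)^[t] (Smag n g σ) i := by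
    intro i
    have h1 := Eexp_contract hn hβ0 hpnn hknn hgcard t σ τ hOrd i
    have hfun : (fun l => Smag n g σ l - Smag n g τ l) = fun l => 2 * Smag n g σ l := by
      funext l
      rw [hSτ l]
      ring
    rw [hfun, hτeq i] at h1
    have h2 := congrFun (QAit_smul (n := n) (β := β) (p := p) (k := k) t 2 (Smag n g σ)) i
    have h3 : (QA n β p k)^[t] (fun l => 2 * Smag n g σ l) i
        = 2 * (QA n β p k)^[t] (Smag n g σ) i := h2
    rw [h3] at h1
    linarith
  refine ⟨⟨?_, ?_⟩, fun i => ⟨hpos i, ?_⟩⟩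
  · exact Finset.sum_nonneg fun i _ => mul_nonneg (hapos i).le (hpos i)
  · calc ∑ i, a i * Eexp n β k g σ t i
        ≤ ∑ i, a i * (QA n β p k)^[t] (Smag n g σ) i :=
          Finset.sum_le_sum fun i _ => mul_le_mul_of_nonneg_left (hcomp i) (hapos i).le
      _ = ρn ^ t * ∑ i, a i * Smag n g σ i := aQAit hρ t (Smag n g σ)
  · calc Eexp n β k g σ t i ≤ (QA n β p k)^[t] (Smag n g σ) i := hcomp i
      _ ≤ Real.sqrt (p i) * (ρn ^ t * Real.sqrt (∑ j, (Smag n g σ j) ^ 2 / p j)) :=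
          QAit_component_bound hP.hm hn hβ0 hp hknn hks hapos hρ t (Smag n g σ) i

end MultiIsing
end

section
/- Let (W_t)_{t∈ℕ} be a nonnegative supermartingale with respect to a filtration (F_t), and let τ be a stopping time, such that: (i) W_0 = k; (ii) |W_{t+1} − W_t| ≤ B almost surely for a constant B < ∞; (iii) Var(W_{t+1} | F_t) ≥ σ² > 0 almost surely on the event {τ > t}. Then for every u > 12B²/σ², P(τ > u) ≤ 4k/(σ√u). -/
open MeasureTheory Filter

set_option maxHeartbeats 1000000

namespace MultiIsing

section Aux

variable {Ω : Type*} {m0 : MeasurableSpace Ω} {μ : Measure Ω} [IsProbabilityMeasure μ]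
  {ℱ : Filtration ℕ m0}

lemma exp_stoppedValue_eq {M : ℕ → Ω → ℝ} (hM : Martingale M ℱ μ)
    {ρ : Ω → ℕ} (hρ : IsStoppingTime ℱ (fun ω => (ρ ω : WithTop ℕ))) {n : ℕ} (hρn : ∀ ω, ρ ω ≤ n) :
    ∫ ω, stoppedValue M (fun ω => (ρ ω : WithTop ℕ)) ω ∂μ = ∫ ω, M 0 ω ∂μ := by
  have h1 := hM.submartingale.expected_stoppedValue_mono (isStoppingTime_const ℱ 0) hρ
    (fun ω => WithTop.coe_le_coe.2 (Nat.zero_le _)) (fun ω => WithTop.coe_le_coe.2 (hρn ω))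
  have h2 := hM.neg.submartingale.expected_stoppedValue_mono (isStoppingTime_const ℱ 0) hρ
    (fun ω => WithTop.coe_le_coe.2 (Nat.zero_le _)) (fun ω => WithTop.coe_le_coe.2 (hρn ω))
  rw [stoppedValue_const] at h1 h2
  have e1 : stoppedValue (-M) (fun ω => (ρ ω : WithTop ℕ)) = fun ω => -(stoppedValue M (fun ω => (ρ ω : WithTop ℕ)) ω) := rfl
  have e2 : (-M) 0 = fun ω => -(M 0 ω) := rfl
  rw [e1, e2, integral_neg, integral_neg] at h2
  have h2' : ∫ ω, stoppedValue M (fun ω => (ρ ω : WithTop ℕ)) ω ∂μ ≤ ∫ ω, M 0 ω ∂μ := by linarith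
  exact le_antisymm h2' h1


lemma second_moment_stopped {M : ℕ → Ω → ℝ} (hM : Martingale M ℱ μ)
    {ρ : Ω → ℕ} (hρ : IsStoppingTime ℱ (fun ω => (ρ ω : WithTop ℕ))) {n : ℕ} (hρn : ∀ ω, ρ ω ≤ n)
    {C : ℝ} (hC : 0 ≤ C) (hbdd : ∀ t, t ≤ n → ∀ᵐ ω ∂μ, |M t ω| ≤ C)
    {σ2 : ℝ}
    (hvar : ∀ t, ∀ᵐ ω ∂μ, t < ρ ω →
      σ2 ≤ (μ[fun ω' => (M (t+1) ω' - M t ω')^2|ℱ t]) ω) :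
    σ2 * ∑ t ∈ Finset.range n, (μ {ω | t < ρ ω}).toReal
      ≤ ∫ ω, (stoppedValue M (fun ω => (ρ ω : WithTop ℕ)) ω)^2 ∂μ := by
  classical
  have hball : ∀ᵐ ω ∂μ, ∀ j, j ≤ n → |M j ω| ≤ C := by
    rw [ae_all_iff]
    intro j
    by_cases hj : j ≤ n
    · exact (hbdd j hj).mono fun ω hω _ => hω
    · exact ae_of_all _ fun ω hle => absurd hle hj
  set F : ℕ → Ω → ℝ := fun t ω => M (min (ρ ω) t) ω with hF_def
  have hprog := hM.stronglyAdapted.progMeasurable_of_discrete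
  have hFmeas : ∀ t, StronglyMeasurable (F t) := by
    intro t
    have : F t = stoppedValue M (fun ω => ((min (ρ ω) t : ℕ) : WithTop ℕ)) := rfl
    rw [this]
    have hst : IsStoppingTime ℱ (fun ω => ((min (ρ ω) t : ℕ) : WithTop ℕ)) := by
      have e : (fun ω => ((min (ρ ω) t : ℕ) : WithTop ℕ)) = fun ω => min ((ρ ω : ℕ) : WithTop ℕ) (t : WithTop ℕ) :=
        funext fun ω => WithTop.coe_min _ _
      rw [e]; exact hρ.min_const t
    exact (stronglyMeasurable_stoppedValue_of_le hprog hst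
      (fun _ => WithTop.coe_le_coe.2 (min_le_right _ _))).mono (ℱ.le t)
  have hFbdd : ∀ t, t ≤ n → ∀ᵐ ω ∂μ, |F t ω| ≤ C := by
    intro t ht
    filter_upwards [hball] with ω hω
    exact hω _ (le_trans (min_le_right _ _) ht)
  have hFint2 : ∀ t, t ≤ n → Integrable (fun ω => (F t ω)^2) μ := by
    intro t ht
    have hsm : StronglyMeasurable (fun ω => (F t ω)^2) := by
      have he : (fun ω => (F t ω)^2) = fun ω => F t ω * F t ω := by funext ω; ring
      rw [he]; exact (hFmeas t).mul (hFmeas t)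
    refine Integrable.mono' (integrable_const (C^2)) hsm.aestronglyMeasurable ?_
    filter_upwards [hFbdd t ht] with ω hω
    rw [Real.norm_eq_abs, abs_of_nonneg (sq_nonneg _), ← sq_abs]
    exact pow_le_pow_left₀ (abs_nonneg _) hω 2
  have key : ∀ t, t ≤ n → σ2 * ∑ s ∈ Finset.range t, (μ {ω | s < ρ ω}).toReal
      ≤ ∫ ω, (F t ω)^2 ∂μ := by
    intro t
    induction t with
    | zero =>
      intro _
      simp only [Finset.range_zero, Finset.sum_empty, mul_zero]
      exact integral_nonneg fun ω => sq_nonneg _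
    | succ t ih =>
      intro ht1
      have ht : t ≤ n := le_trans (Nat.le_succ t) ht1
      have ihh := ih ht
      set s : Set Ω := {ω | t < ρ ω} with hs_def
      have hs_meas : MeasurableSet[ℱ t] s := by
        have hc : s = {ω | ρ ω ≤ t}ᶜ := by
          ext ω; simp [hs_def, Set.mem_setOf_eq, not_le]
        have hset : {ω | ((ρ ω : ℕ) : WithTop ℕ) ≤ ((t : ℕ) : WithTop ℕ)} = {ω | ρ ω ≤ t} :=
          Set.ext fun ω => WithTop.coe_le_coe
        rw [hc, ← hset]; exact (hρ t).compl
      have hs_m0 : MeasurableSet s := ℱ.le t _ hs_meas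
      set Δ : Ω → ℝ := fun ω => M (t+1) ω - M t ω with hΔ_def
      have hMtm : StronglyMeasurable (M t) := (hM.stronglyAdapted t).mono (ℱ.le t)
      have hMt1m : StronglyMeasurable (M (t+1)) := (hM.stronglyAdapted (t+1)).mono (ℱ.le (t+1))
      have hΔmeas : StronglyMeasurable Δ := hMt1m.sub hMtm
      have hΔbdd : ∀ᵐ ω ∂μ, |Δ ω| ≤ 2*C := by
        filter_upwards [hbdd (t+1) ht1, hbdd t ht] with ω h1 h2
        calc |Δ ω| ≤ |M (t+1) ω| + |M t ω| := abs_sub _ _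
          _ ≤ 2*C := by linarith
      have hΔint : Integrable Δ μ :=
        Integrable.mono' (integrable_const (2*C)) hΔmeas.aestronglyMeasurable
          (hΔbdd.mono fun ω h => by rwa [Real.norm_eq_abs])
      have hΔ2int : Integrable (fun ω => Δ ω^2) μ := by
        have hsm : StronglyMeasurable (fun ω => Δ ω^2) := by
          have he : (fun ω => Δ ω^2) = fun ω => Δ ω * Δ ω := by funext ω; ring
          rw [he]; exact hΔmeas.mul hΔmeas
        refine Integrable.mono' (integrable_const ((2*C)^2)) hsm.aestronglyMeasurable ?_
        filter_upwards [hΔbdd] with ω hω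
        rw [Real.norm_eq_abs, abs_of_nonneg (sq_nonneg _), ← sq_abs]
        exact pow_le_pow_left₀ (abs_nonneg _) hω 2
      have hMtΔint : Integrable (fun ω => M t ω * Δ ω) μ := by
        refine Integrable.mono' (integrable_const (C*(2*C)))
          (hMtm.mul hΔmeas).aestronglyMeasurable ?_
        filter_upwards [hbdd t ht, hΔbdd] with ω h1 h2
        rw [Real.norm_eq_abs, abs_mul]
        exact mul_le_mul h1 h2 (abs_nonneg _) hC
      -- pointwise decomposition
      have hpt : ∀ ω, (F (t+1) ω)^2
          = (F t ω)^2 + s.indicator (fun ω' => 2*(M t ω' * Δ ω') + Δ ω'^2) ω := by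
        intro ω
        by_cases hω : ω ∈ s
        · rw [Set.indicator_of_mem hω]
          have hρω : t < ρ ω := hω
          have h1 : min (ρ ω) (t+1) = t+1 := min_eq_right hρω
          have h2 : min (ρ ω) t = t := min_eq_right (le_of_lt hρω)
          simp only [hF_def, h1, h2, hΔ_def]
          ring
        · rw [Set.indicator_of_notMem hω]
          have hρω : ρ ω ≤ t := not_lt.mp hω
          have h1 : min (ρ ω) (t+1) = ρ ω := min_eq_left (le_trans hρω (Nat.le_succ t))
          have h2 : min (ρ ω) t = ρ ω := min_eq_left hρω
          simp only [hF_def, h1, h2]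
          ring
      have hint_inner : Integrable (fun ω => 2*(M t ω * Δ ω) + Δ ω^2) μ :=
        (hMtΔint.const_mul 2).add hΔ2int
      have hsplit : ∫ ω, (F (t+1) ω)^2 ∂μ
          = ∫ ω, (F t ω)^2 ∂μ + ∫ ω in s, (2*(M t ω * Δ ω) + Δ ω^2) ∂μ := by
        rw [← integral_indicator hs_m0, ← integral_add (hFint2 t ht) (hint_inner.indicator hs_m0)]
        exact integral_congr_ae (ae_of_all _ hpt)
      have hrest : ∫ ω in s, (2*(M t ω * Δ ω) + Δ ω^2) ∂μ
          = 2 * ∫ ω in s, M t ω * Δ ω ∂μ + ∫ ω in s, Δ ω^2 ∂μ := by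
        rw [integral_add ((hMtΔint.const_mul 2).integrableOn) (hΔ2int.integrableOn),
          integral_const_mul]
      -- cross term vanishes
      have hcross : ∫ ω in s, M t ω * Δ ω ∂μ = 0 := by
        have hφ : StronglyMeasurable[ℱ t] (s.indicator (M t)) :=
          (hM.stronglyAdapted t).indicator hs_meas
        have heqi : (fun ω => s.indicator (M t) ω * Δ ω) = s.indicator (fun ω => M t ω * Δ ω) := by
          funext ω
          by_cases hω : ω ∈ s <;> simp [Set.indicator_of_mem, Set.indicator_of_notMem, hω]
        have hφΔint : Integrable (s.indicator (M t) * Δ) μ := by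
          have : (s.indicator (M t) * Δ) = s.indicator (fun ω => M t ω * Δ ω) := heqi
          rw [this]
          exact hMtΔint.indicator hs_m0
        have h2 : μ[s.indicator (M t) * Δ|ℱ t]
            =ᵐ[μ] s.indicator (M t) * μ[Δ|ℱ t] :=
          condExp_mul_of_stronglyMeasurable_left hφ hφΔint hΔint
        have h3 : μ[Δ|ℱ t] =ᵐ[μ] 0 := by
          have ha : μ[Δ|ℱ t] =ᵐ[μ] μ[M (t+1)|ℱ t] - μ[M t|ℱ t] :=
            condExp_sub (hM.integrable (t+1)) (hM.integrable t) _
          have hb : μ[M (t+1)|ℱ t] =ᵐ[μ] M t := hM.condExp_ae_eq (Nat.le_succ t)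
          have hcc : μ[M t|ℱ t] =ᵐ[μ] M t := by
            rw [condExp_of_stronglyMeasurable (ℱ.le t) (hM.stronglyAdapted t) (hM.integrable t)]
          filter_upwards [ha, hb, hcc] with ω h1 h2 h3
          simp only [h1, Pi.sub_apply, h2, h3, sub_self, Pi.zero_apply]
        have h4 : (s.indicator (M t) * μ[Δ|ℱ t]) =ᵐ[μ] 0 := by
          filter_upwards [h3] with ω hω
          simp only [Pi.mul_apply, hω, Pi.zero_apply, mul_zero]
        calc ∫ ω in s, M t ω * Δ ω ∂μ
            = ∫ ω, s.indicator (fun ω' => M t ω' * Δ ω') ω ∂μ := (integral_indicator hs_m0).symm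
          _ = ∫ ω, (s.indicator (M t) * Δ) ω ∂μ := by rw [← heqi]; rfl
          _ = ∫ ω, (μ[s.indicator (M t) * Δ|ℱ t]) ω ∂μ := (integral_condExp (ℱ.le t)).symm
          _ = ∫ ω, (0 : Ω → ℝ) ω ∂μ := integral_congr_ae (h2.trans h4)
          _ = 0 := by simp
      -- variance lower bound
      have hvar' : σ2 * (μ s).toReal ≤ ∫ ω in s, Δ ω^2 ∂μ := by
        have hcx : ∫ ω in s, Δ ω^2 ∂μ = ∫ ω in s, (μ[fun ω' => Δ ω'^2|ℱ t]) ω ∂μ :=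
          (setIntegral_condExp (ℱ.le t) hΔ2int hs_meas).symm
        rw [hcx]
        have hle : ∀ᵐ ω ∂μ.restrict s, σ2 ≤ (μ[fun ω' => Δ ω'^2|ℱ t]) ω := by
          rw [ae_restrict_iff' hs_m0]
          filter_upwards [hvar t] with ω h hω
          exact h hω
        calc σ2 * (μ s).toReal = ∫ _ in s, σ2 ∂μ := by
              rw [setIntegral_const, smul_eq_mul, mul_comm]; rfl
          _ ≤ ∫ ω in s, (μ[fun ω' => Δ ω'^2|ℱ t]) ω ∂μ :=
              integral_mono_ae (integrable_const σ2)
                (show IntegrableOn (fun ω => (μ[fun ω' => Δ ω'^2|ℱ t]) ω) s μ from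
                  integrable_condExp.integrableOn) hle
      calc σ2 * ∑ j ∈ Finset.range (t+1), (μ {ω | j < ρ ω}).toReal
          = σ2 * ∑ j ∈ Finset.range t, (μ {ω | j < ρ ω}).toReal + σ2 * (μ s).toReal := by
            rw [Finset.sum_range_succ]; ring
        _ ≤ ∫ ω, (F t ω)^2 ∂μ + ∫ ω in s, Δ ω^2 ∂μ := add_le_add ihh hvar'
        _ = ∫ ω, (F (t+1) ω)^2 ∂μ := by rw [hsplit, hrest, hcross]; ring
  have hfin : stoppedValue M (fun ω => (ρ ω : WithTop ℕ)) = F n := by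
    funext ω
    show M (ρ ω) ω = M (min (ρ ω) n) ω
    rw [min_eq_left (hρn ω)]
  rw [hfin]
  exact key n le_rfl

end Aux

/-- a nonnegative supermartingale starting at `k`, with increments
bounded by `B` and conditional variance at least `σ² > 0` on `{τ > t}`, satisfies
`P(τ > u) ≤ 4k/(σ√u)` for every `u > 12B²/σ²`. -/
theorem supermartingale_stopping_tail
    {Ω : Type*} {m0 : MeasurableSpace Ω} {μ : Measure Ω} [IsProbabilityMeasure μ]
    (ℱ : Filtration ℕ m0)
    (W : ℕ → Ω → ℝ) (hW : Supermartingale W ℱ μ)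
    (hpos : ∀ t : ℕ, 0 ≤ᵐ[μ] W t)
    (k : ℝ) (h0 : W 0 =ᵐ[μ] fun _ => k)
    (B : ℝ) (hB : ∀ t : ℕ, ∀ᵐ ω ∂μ, |W (t + 1) ω - W t ω| ≤ B)
    (τ : Ω → ℕ∞) (hτ : ∀ t : ℕ, MeasurableSet[ℱ t] {ω | τ ω ≤ (t : ℕ∞)})
    (σ : ℝ) (hσ : 0 < σ)
    (hvar : ∀ t : ℕ, ∀ᵐ ω ∂μ, (t : ℕ∞) < τ ω →
      σ ^ 2 ≤ (μ[fun ω' => (W (t + 1) ω' - (μ[W (t + 1)|ℱ t]) ω') ^ 2|ℱ t]) ω) :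
    ∀ u : ℝ, 12 * B ^ 2 / σ ^ 2 < u →
      (μ {ω | (⌊u⌋₊ : ℕ∞) < τ ω}).toReal ≤ 4 * k / (σ * Real.sqrt u) := by
  classical
  intro u hu
  haveI : (ae μ).NeBot := ae_neBot.2 (IsProbabilityMeasure.ne_zero μ)
  have hB0 : 0 ≤ B := by
    obtain ⟨ω, hω⟩ := (hB 0).exists
    exact le_trans (abs_nonneg _) hω
  have hk0 : 0 ≤ k := by
    have hae : ∀ᵐ ω ∂μ, 0 ≤ k := by
      filter_upwards [hpos 0, h0] with ω h1 h2
      rw [← h2]; exact h1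
    exact hae.exists.choose_spec
  have hu0 : 0 < u := lt_of_le_of_lt (by positivity) hu
  have hsqu : 0 < Real.sqrt u := Real.sqrt_pos.mpr hu0
  have hσ2 : (0:ℝ) < σ^2 := pow_pos hσ 2
  set S := σ * Real.sqrt u with hS_def
  have hS : 0 < S := mul_pos hσ hsqu
  have hS2 : S^2 = σ^2 * u := by
    rw [hS_def, mul_pow, Real.sq_sqrt hu0.le]
  have h12 : 12 * B^2 < σ^2 * u := by
    rw [div_lt_iff₀ hσ2] at hu; linarith
  by_cases htriv : S ≤ 4 * k
  · have h1 : (μ {ω | ((⌊u⌋₊:ℕ):ℕ∞) < τ ω}).toReal ≤ 1 := by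
      simpa using ENNReal.toReal_mono ENNReal.one_ne_top prob_le_one
    calc (μ {ω | ((⌊u⌋₊:ℕ):ℕ∞) < τ ω}).toReal ≤ 1 := h1
      _ ≤ 4 * k / S := (one_le_div hS).2 htriv
  push_neg at htriv
  -- bound on the conditional-mean-centered increments
  have hgbd : ∀ s : ℕ, ∀ᵐ ω ∂μ, |W (s+1) ω - (μ[W (s+1)|ℱ s]) ω| ≤ 2*B := by
    intro s
    have hint1 : Integrable (fun ω => W s ω - W (s+1) ω) μ :=
      (hW.2.2 s).sub (hW.2.2 (s+1))
    have hsubc : μ[fun ω => W s ω - W (s+1) ω|ℱ s]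
        =ᵐ[μ] μ[W s|ℱ s] - μ[W (s+1)|ℱ s] := condExp_sub (hW.2.2 s) (hW.2.2 (s+1)) _
    have hWs : μ[W s|ℱ s] = W s :=
      condExp_of_stronglyMeasurable (ℱ.le s) (hW.1 s) (hW.2.2 s)
    have hup : μ[fun ω => W s ω - W (s+1) ω|ℱ s] ≤ᵐ[μ] fun _ => B := by
      have h1 : (fun ω => W s ω - W (s+1) ω) ≤ᵐ[μ] fun _ => B := by
        filter_upwards [hB s] with ω hh
        have := abs_le.mp hh; linarith
      calc μ[fun ω => W s ω - W (s+1) ω|ℱ s]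
          ≤ᵐ[μ] μ[(fun _ => B)|ℱ s] := condExp_mono hint1 (integrable_const B) h1
        _ =ᵐ[μ] fun _ => B := by rw [condExp_const (ℱ.le s) B]
    have hdn : (fun (_ : Ω) => -B) ≤ᵐ[μ] μ[fun ω => W s ω - W (s+1) ω|ℱ s] := by
      have h1 : (fun (_:Ω) => -B) ≤ᵐ[μ] fun ω => W s ω - W (s+1) ω := by
        filter_upwards [hB s] with ω hh
        have := abs_le.mp hh; linarith
      calc (fun (_:Ω) => -B) =ᵐ[μ] μ[(fun _ => -B)|ℱ s] := by rw [condExp_const (ℱ.le s) (-B)]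
        _ ≤ᵐ[μ] μ[fun ω => W s ω - W (s+1) ω|ℱ s] :=
          condExp_mono (integrable_const (-B)) hint1 h1
    filter_upwards [hup, hdn, hsubc, hB s] with ω h1 h2 h3 h4
    have hWg : |W s ω - (μ[W (s+1)|ℱ s]) ω| ≤ B := by
      have h3' : (μ[fun ω => W s ω - W (s+1) ω|ℱ s]) ω
          = W s ω - (μ[W (s+1)|ℱ s]) ω := by
        rw [h3, Pi.sub_apply, hWs]
      rw [← h3']
      exact abs_le.mpr ⟨h2, h1⟩
    calc |W (s+1) ω - (μ[W (s+1)|ℱ s]) ω|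
        ≤ |W (s+1) ω - W s ω| + |W s ω - (μ[W (s+1)|ℱ s]) ω| := abs_sub_le _ _ _
      _ ≤ B + B := add_le_add h4 hWg
      _ = 2*B := by ring
  have hΔWint : ∀ s:ℕ, Integrable (fun ω => (W (s+1) ω - (μ[W (s+1)|ℱ s]) ω)^2) μ := by
    intro s
    have hm : StronglyMeasurable (fun ω => W (s+1) ω - (μ[W (s+1)|ℱ s]) ω) :=
      ((hW.1 (s+1)).mono (ℱ.le (s+1))).sub (stronglyMeasurable_condExp.mono (ℱ.le s))
    have hm2 : StronglyMeasurable (fun ω => (W (s+1) ω - (μ[W (s+1)|ℱ s]) ω)^2) := by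
      have he : (fun ω => (W (s+1) ω - (μ[W (s+1)|ℱ s]) ω)^2)
          = fun ω => (W (s+1) ω - (μ[W (s+1)|ℱ s]) ω) * (W (s+1) ω - (μ[W (s+1)|ℱ s]) ω) := by
        funext ω; ring
      rw [he]; exact hm.mul hm
    refine Integrable.mono' (integrable_const ((2*B)^2)) hm2.aestronglyMeasurable ?_
    filter_upwards [hgbd s] with ω hω
    rw [Real.norm_eq_abs, abs_of_nonneg (sq_nonneg _), ← sq_abs]
    exact pow_le_pow_left₀ (abs_nonneg _) hω 2
  by_cases hτ0 : μ {ω | (0:ℕ∞) < τ ω} = 0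
  · have hsub : {ω | ((⌊u⌋₊:ℕ):ℕ∞) < τ ω} ⊆ {ω | (0:ℕ∞) < τ ω} :=
      fun ω hω => show (0:ℕ∞) < τ ω from lt_of_le_of_lt zero_le hω
    have hz : μ {ω | ((⌊u⌋₊:ℕ):ℕ∞) < τ ω} = 0 := measure_mono_null hsub hτ0
    rw [hz]
    simp only [ENNReal.toReal_zero]
    positivity
  have hσB : σ^2 ≤ 4*B^2 := by
    by_contra hcon
    push_neg at hcon
    have hub : ∀ᵐ ω ∂μ,
        (μ[fun ω' => (W (0+1) ω' - (μ[W (0+1)|ℱ 0]) ω')^2|ℱ 0]) ω ≤ 4*B^2 := by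
      have hle : (fun ω' => (W (0+1) ω' - (μ[W (0+1)|ℱ 0]) ω')^2) ≤ᵐ[μ] fun _ => 4*B^2 := by
        filter_upwards [hgbd 0] with ω hω
        calc (W (0+1) ω - (μ[W (0+1)|ℱ 0]) ω)^2
            = |W (0+1) ω - (μ[W (0+1)|ℱ 0]) ω|^2 := (sq_abs _).symm
          _ ≤ (2*B)^2 := pow_le_pow_left₀ (abs_nonneg _) hω 2
          _ = 4*B^2 := by ring
      calc μ[fun ω' => (W (0+1) ω' - (μ[W (0+1)|ℱ 0]) ω')^2|ℱ 0]
          ≤ᵐ[μ] μ[(fun _ => 4*B^2)|ℱ 0] :=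
            condExp_mono (hΔWint 0) (integrable_const _) hle
        _ =ᵐ[μ] fun _ => 4*B^2 := by rw [condExp_const (ℱ.le 0)]
    have hbad : ∀ᵐ ω ∂μ, ω ∉ {ω | (0:ℕ∞) < τ ω} := by
      filter_upwards [hvar 0, hub] with ω h1 h2 hlt
      have := le_trans (h1 hlt) h2
      linarith
    exact hτ0 (measure_eq_zero_iff_ae_notMem.mpr hbad)
  have hu3 : 3 < u := by nlinarith
  set n := ⌊u⌋₊ with hn_def
  have hn3 : 3 ≤ n := Nat.le_floor (by exact_mod_cast hu3.le)
  have hnu : (n:ℝ) ≤ u := Nat.floor_le hu0.le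
  have hn1 : u < (n:ℝ) + 1 := Nat.lt_floor_add_one u
  have hn0 : (0:ℝ) < n := by
    have : (3:ℝ) ≤ n := by exact_mod_cast hn3
    linarith
  -- Doob decomposition: martingale part of W
  set A : ℕ → Ω → ℝ := fun t ω => ∑ s ∈ Finset.range t, ((μ[W (s+1)|ℱ s]) ω - W s ω)
    with hA_def
  set M : ℕ → Ω → ℝ := fun t ω => W t ω - A t ω with hM_def
  have hMdiff : ∀ t ω, M (t+1) ω - M t ω = W (t+1) ω - (μ[W (t+1)|ℱ t]) ω := by
    intro t ω
    simp only [hM_def, hA_def, Finset.sum_range_succ]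
    ring
  have hAsm : ∀ t, StronglyMeasurable[ℱ t] (A t) := by
    intro t
    refine Finset.stronglyMeasurable_fun_sum _ fun s hs => ?_
    have hst : s ≤ t := le_of_lt (Finset.mem_range.mp hs)
    exact (stronglyMeasurable_condExp.mono (ℱ.mono hst)).sub
      ((hW.1 s).mono (ℱ.mono hst))
  have hAsm1 : ∀ t, StronglyMeasurable[ℱ t] (A (t+1)) := by
    intro t
    refine Finset.stronglyMeasurable_fun_sum _ fun s hs => ?_
    have hst : s ≤ t := Nat.lt_succ_iff.mp (Finset.mem_range.mp hs)
    exact (stronglyMeasurable_condExp.mono (ℱ.mono hst)).sub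
      ((hW.1 s).mono (ℱ.mono hst))
  have hM_adpt : StronglyAdapted ℱ M := fun t => (hW.1 t).sub (hAsm t)
  have hAint : ∀ t, Integrable (A t) μ := by
    intro t
    exact integrable_finset_sum _ fun s _ => integrable_condExp.sub (hW.2.2 s)
  have hMint : ∀ t, Integrable (M t) μ := fun t => (hW.2.2 t).sub (hAint t)
  have hMmart : Martingale M ℱ μ := by
    refine martingale_nat hM_adpt hMint fun t => ?_
    have e0 : M (t+1) = W (t+1) - A (t+1) := rfl
    have e1 : μ[M (t+1)|ℱ t] =ᵐ[μ] μ[W (t+1)|ℱ t] - μ[A (t+1)|ℱ t] := by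
      rw [e0]; exact condExp_sub (hW.2.2 (t+1)) (hAint (t+1)) _
    have e2 : μ[A (t+1)|ℱ t] = A (t+1) :=
      condExp_of_stronglyMeasurable (ℱ.le t) (hAsm1 t) (hAint (t+1))
    refine EventuallyEq.symm ?_
    calc μ[M (t+1)|ℱ t] =ᵐ[μ] μ[W (t+1)|ℱ t] - μ[A (t+1)|ℱ t] := e1
      _ = M t := by
        rw [e2]
        funext ω
        simp only [Pi.sub_apply, hM_def, hA_def, Finset.sum_range_succ]
        ring
  -- a.e. pointwise facts about M
  have hgle : ∀ s:ℕ, μ[W (s+1)|ℱ s] ≤ᵐ[μ] W s := fun s => hW.2.1 s (s+1) (Nat.le_succ s)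
  have hMfacts : ∀ᵐ ω ∂μ, (∀ t, 0 ≤ M t ω) ∧ M 0 ω = k ∧
      (∀ t, |M (t+1) ω - M t ω| ≤ 2*B) ∧ (∀ t, M t ω ≤ k + 2*B*t) := by
    have h1 : ∀ᵐ ω ∂μ, ∀ s:ℕ, 0 ≤ W s ω := ae_all_iff.2 hpos
    have h2 : ∀ᵐ ω ∂μ, ∀ s:ℕ, (μ[W (s+1)|ℱ s]) ω ≤ W s ω := ae_all_iff.2 hgle
    have h3 : ∀ᵐ ω ∂μ, ∀ s:ℕ, |W (s+1) ω - (μ[W (s+1)|ℱ s]) ω| ≤ 2*B := ae_all_iff.2 hgbd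
    filter_upwards [h0, h1, h2, h3] with ω e0 epos ele ebd
    have hM0 : M 0 ω = k := by
      simp only [hM_def, hA_def, Finset.range_zero, Finset.sum_empty, sub_zero]
      exact e0
    have hMnn : ∀ t, 0 ≤ M t ω := by
      intro t
      have hA : A t ω ≤ 0 := Finset.sum_nonpos fun s _ => sub_nonpos.mpr (ele s)
      have := epos t
      simp only [hM_def]
      linarith
    have hstep : ∀ t, |M (t+1) ω - M t ω| ≤ 2*B := fun t => by
      rw [hMdiff]; exact ebd t
    have hgrow : ∀ t, M t ω ≤ k + 2*B*t := by
      intro t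
      induction t with
      | zero => simp [hM0]
      | succ t ih =>
        have h := abs_le.mp (hstep t)
        push_cast
        have : M (t+1) ω ≤ M t ω + 2*B := by linarith [h.2]
        linarith
    exact ⟨hMnn, hM0, hstep, hgrow⟩
  -- threshold
  set h : ℝ := S/2 with hh_def
  have hhpos : 0 < h := by rw [hh_def]; positivity
  have hkh : k < h := by rw [hh_def]; linarith
  -- stopping times
  set τn : Ω → ℕ := fun ω => (min (τ ω) n).toNat with hτn_def
  have hτn_st : IsStoppingTime ℱ (fun ω => (τn ω : WithTop ℕ)) := by
    intro t
    have hset : {ω | ((τn ω : ℕ) : WithTop ℕ) ≤ ((t : ℕ) : WithTop ℕ)} = {ω | τn ω ≤ t} :=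
      Set.ext fun ω => WithTop.coe_le_coe
    refine (congrArg (MeasurableSet[ℱ t]) hset).mpr ?_
    by_cases hnt : n ≤ t
    · have hall : {ω | τn ω ≤ t} = Set.univ := by
        ext ω
        simp only [Set.mem_setOf_eq, Set.mem_univ, iff_true]
        exact le_trans (ENat.toNat_le_of_le_coe (min_le_right _ _)) hnt
      rw [hall]; exact MeasurableSet.univ
    · push_neg at hnt
      have heq : {ω | τn ω ≤ t} = {ω | τ ω ≤ (t:ℕ∞)} := by
        ext ω
        simp only [Set.mem_setOf_eq]
        constructor
        · intro hle
          by_contra hcon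
          push_neg at hcon
          have hmin : (t:ℕ∞) < min (τ ω) n := lt_min hcon (by exact_mod_cast hnt)
          have hne : min (τ ω) (n:ℕ∞) ≠ ⊤ :=
            ne_top_of_le_ne_top (ENat.coe_ne_top n) (min_le_right _ _)
          have h2 : (t:ℕ∞) < ((min (τ ω) n).toNat : ℕ∞) := by
            rw [ENat.coe_toNat hne]; exact hmin
          have ht' : t < (min (τ ω) (n:ℕ∞)).toNat := by exact_mod_cast h2
          simp only [hτn_def] at hle
          omega
        · intro hle
          exact ENat.toNat_le_of_le_coe (le_trans (min_le_left _ _) hle)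
      rw [heq]; exact hτ t
  set Ht : Ω → ℕ := hittingBtwn M (Set.Ici h) 0 n with hHt_def
  have hHt_st : IsStoppingTime ℱ (fun ω => (Ht ω : WithTop ℕ)) :=
    hM_adpt.adapted.isStoppingTime_hittingBtwn measurableSet_Ici
  have hHt_le : ∀ ω, Ht ω ≤ n := fun ω => hittingBtwn_le ω
  set ρ : Ω → ℕ := fun ω => min (τn ω) (Ht ω) with hρ_def
  have hρ_st : IsStoppingTime ℱ (fun ω => (ρ ω : WithTop ℕ)) := by
    have e : (fun ω => (ρ ω : WithTop ℕ)) = fun ω => min ((τn ω : ℕ) : WithTop ℕ) ((Ht ω : ℕ) : WithTop ℕ) :=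
      funext fun ω => WithTop.coe_min _ _
    rw [e]; exact hτn_st.min hHt_st
  have hρ_le : ∀ ω, ρ ω ≤ n := fun ω => le_trans (min_le_right _ _) (hHt_le ω)
  have hρτ : ∀ (t:ℕ) ω, t < ρ ω → (t:ℕ∞) < τ ω := by
    intro t ω hlt
    have h1 : t < τn ω := lt_of_lt_of_le hlt (min_le_left _ _)
    have h2 : (t:ℕ∞) < ((τn ω : ℕ):ℕ∞) := by exact_mod_cast h1
    calc (t:ℕ∞) < ((τn ω : ℕ):ℕ∞) := h2
      _ ≤ min (τ ω) n := ENat.coe_toNat_le_self _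
      _ ≤ τ ω := min_le_left _ _
  -- hypotheses for the second-moment lemma
  set C : ℝ := k + 2*B*n with hC_def
  have hC : 0 ≤ C := by rw [hC_def]; positivity
  have hbddM : ∀ t, t ≤ n → ∀ᵐ ω ∂μ, |M t ω| ≤ C := by
    intro t ht
    filter_upwards [hMfacts] with ω hω
    obtain ⟨hnn, _, _, hgrow⟩ := hω
    rw [abs_of_nonneg (hnn t)]
    have htn : (t:ℝ) ≤ n := by exact_mod_cast ht
    calc M t ω ≤ k + 2*B*t := hgrow t
      _ ≤ C := by rw [hC_def]; nlinarith
  have hvarM : ∀ t:ℕ, ∀ᵐ ω ∂μ, t < ρ ω →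
      σ^2 ≤ (μ[fun ω' => (M (t+1) ω' - M t ω')^2|ℱ t]) ω := by
    intro t
    have heqf : (fun ω' => (M (t+1) ω' - M t ω')^2)
        = fun ω' => (W (t+1) ω' - (μ[W (t+1)|ℱ t]) ω')^2 := funext fun ω' => by
      rw [hMdiff]
    rw [heqf]
    filter_upwards [hvar t] with ω hv hlt
    exact hv (hρτ t ω hlt)
  have hprog : ProgMeasurable ℱ M := hM_adpt.progMeasurable_of_discrete
  -- expectation of M 0
  have hM0int : ∫ ω, M 0 ω ∂μ = k := by
    have he : M 0 =ᵐ[μ] fun _ => k := hMfacts.mono fun ω hω => hω.2.1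
    rw [integral_congr_ae he, integral_const, probReal_univ]
    simp
  -- the hit event
  set hit : Set Ω := ⋃ j ∈ Finset.range (n+1), {ω | h ≤ M j ω} with hhit_def
  have hhit_meas : MeasurableSet hit := by
    refine Set.Finite.measurableSet_biUnion (Finset.range (n+1)).finite_toSet fun j _ => ?_
    exact measurableSet_le measurable_const ((hM_adpt j).mono (ℱ.le j)).measurable
  have hsv_int : Integrable (stoppedValue M (fun ω => (Ht ω : WithTop ℕ))) μ :=
    integrable_stoppedValue ℕ hHt_st hMint (fun ω => WithTop.coe_le_coe.2 (hHt_le ω))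
  have hsv_exp : ∫ ω, stoppedValue M (fun ω => (Ht ω : WithTop ℕ)) ω ∂μ = k := by
    rw [exp_stoppedValue_eq hMmart hHt_st hHt_le, hM0int]
  have hsv_nonneg : ∀ᵐ ω ∂μ, 0 ≤ stoppedValue M (fun ω => (Ht ω : WithTop ℕ)) ω :=
    hMfacts.mono fun ω hω => hω.1 _
  have hhit_bound : h * (μ hit).toReal ≤ k := by
    have hptw : ∀ ω ∈ hit, h ≤ stoppedValue M (fun ω => (Ht ω : WithTop ℕ)) ω := by
      intro ω hω
      simp only [hhit_def, Set.mem_iUnion, Set.mem_setOf_eq, Finset.mem_range] at hω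
      obtain ⟨j, hj, hjω⟩ := hω
      have hex : ∃ j ∈ Set.Icc 0 n, M j ω ∈ Set.Ici h :=
        ⟨j, ⟨Nat.zero_le _, Nat.lt_succ_iff.mp hj⟩, hjω⟩
      have := hittingBtwn_mem_set hex
      exact this
    calc h * (μ hit).toReal
        ≤ ∫ ω in hit, stoppedValue M (fun ω => (Ht ω : WithTop ℕ)) ω ∂μ :=
          by have := setIntegral_ge_of_const_le hhit_meas (measure_ne_top μ hit) hptw
               hsv_int.integrableOn
             rw [smul_eq_mul, mul_comm] at this; exact this
      _ ≤ ∫ ω, stoppedValue M (fun ω => (Ht ω : WithTop ℕ)) ω ∂μ := setIntegral_le_integral hsv_int hsv_nonneg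
      _ = k := hsv_exp
  -- the stopped value at ρ
  have hsv2_int : Integrable (stoppedValue M (fun ω => (ρ ω : WithTop ℕ))) μ :=
    integrable_stoppedValue ℕ hρ_st hMint (fun ω => WithTop.coe_le_coe.2 (hρ_le ω))
  have hsv2_exp : ∫ ω, stoppedValue M (fun ω => (ρ ω : WithTop ℕ)) ω ∂μ = k := by
    rw [exp_stoppedValue_eq hMmart hρ_st hρ_le, hM0int]
  have hsv2_ub : ∀ᵐ ω ∂μ, 0 ≤ stoppedValue M (fun ω => (ρ ω : WithTop ℕ)) ω ∧ stoppedValue M (fun ω => (ρ ω : WithTop ℕ)) ω ≤ h + 2*B := by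
    filter_upwards [hMfacts] with ω hω
    obtain ⟨hnn, hM00, hstep, _⟩ := hω
    refine ⟨hnn _, ?_⟩
    by_cases hcase : stoppedValue M (fun ω => (ρ ω : WithTop ℕ)) ω ≤ h
    · linarith
    · push_neg at hcase
      have hHtρ : Ht ω ≤ ρ ω := by
        by_contra hcon
        push_neg at hcon
        have hnm : M (ρ ω) ω ∉ Set.Ici h := by
          rw [hHt_def] at hcon
          exact notMem_of_lt_hittingBtwn hcon (Nat.zero_le _)
        exact hnm (le_of_lt hcase)
      have hρHt : ρ ω = Ht ω := le_antisymm (min_le_right _ _) hHtρ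
      rcases Nat.eq_zero_or_pos (Ht ω) with h00 | hpos1
      · exfalso
        have : stoppedValue M (fun ω => (ρ ω : WithTop ℕ)) ω = M 0 ω := by
          show M (ρ ω) ω = _
          rw [hρHt, h00]
        rw [this, hM00] at hcase
        linarith
      · obtain ⟨j, hj⟩ := Nat.exists_eq_succ_of_ne_zero (Nat.pos_iff_ne_zero.mp hpos1)
        have hjlt : j < Ht ω := by omega
        have hnot : M j ω ∉ Set.Ici h := by
          rw [hHt_def] at hjlt
          exact notMem_of_lt_hittingBtwn hjlt (Nat.zero_le _)
        have hMj : M j ω < h := not_le.mp hnot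
        have habs := abs_le.mp (hstep j)
        have hval : stoppedValue M (fun ω => (ρ ω : WithTop ℕ)) ω = M (j+1) ω := by
          show M (ρ ω) ω = _
          rw [hρHt, hj]
        rw [hval]
        linarith [habs.2]
  have hsv2sq_int : Integrable (fun ω => (stoppedValue M (fun ω => (ρ ω : WithTop ℕ)) ω)^2) μ := by
    have hsvm : StronglyMeasurable (stoppedValue M (fun ω => (ρ ω : WithTop ℕ))) :=
      (stronglyMeasurable_stoppedValue_of_le hprog hρ_st (fun ω => WithTop.coe_le_coe.2 (hρ_le ω))).mono (ℱ.le n)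
    have hsm : StronglyMeasurable (fun ω => (stoppedValue M (fun ω => (ρ ω : WithTop ℕ)) ω)^2) := by
      have he : (fun ω => (stoppedValue M (fun ω => (ρ ω : WithTop ℕ)) ω)^2)
          = fun ω => stoppedValue M (fun ω => (ρ ω : WithTop ℕ)) ω * stoppedValue M (fun ω => (ρ ω : WithTop ℕ)) ω := by funext ω; ring
      rw [he]; exact hsvm.mul hsvm
    refine Integrable.mono' (integrable_const ((h+2*B)^2)) hsm.aestronglyMeasurable ?_
    filter_upwards [hsv2_ub] with ω hω
    rw [Real.norm_eq_abs, abs_of_nonneg (sq_nonneg _), ← sq_abs]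
    refine pow_le_pow_left₀ (abs_nonneg _) ?_ 2
    rw [abs_of_nonneg hω.1]
    exact hω.2
  have hsv2sq : ∫ ω, (stoppedValue M (fun ω => (ρ ω : WithTop ℕ)) ω)^2 ∂μ ≤ (h + 2*B) * k := by
    have hmono : ∀ᵐ ω ∂μ, (stoppedValue M (fun ω => (ρ ω : WithTop ℕ)) ω)^2 ≤ (h+2*B) * stoppedValue M (fun ω => (ρ ω : WithTop ℕ)) ω := by
      filter_upwards [hsv2_ub] with ω hω
      nlinarith [hω.1, hω.2]
    calc ∫ ω, (stoppedValue M (fun ω => (ρ ω : WithTop ℕ)) ω)^2 ∂μ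
        ≤ ∫ ω, (h+2*B) * stoppedValue M (fun ω => (ρ ω : WithTop ℕ)) ω ∂μ :=
          integral_mono_ae hsv2sq_int (hsv2_int.const_mul _) hmono
      _ = (h+2*B) * k := by rw [integral_const_mul, hsv2_exp]
  have hsum := second_moment_stopped hMmart hρ_st hρ_le hC hbddM hvarM
  -- inclusion of events
  have hincl : {ω | ((n:ℕ):ℕ∞) < τ ω} ⊆ hit ∪ {ω | n - 1 < ρ ω} := by
    intro ω hω
    by_cases hhitω : ω ∈ hit
    · exact Or.inl hhitω
    · right
      have hτω : ((n:ℕ):ℕ∞) < τ ω := hω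
      have hτn_eq : τn ω = n := by
        simp only [hτn_def]
        rw [min_eq_right (le_of_lt hτω)]
        simp
      have hHt_ge : ¬ (Ht ω < n) := by
        intro hlt
        rw [hHt_def, hittingBtwn_lt_iff n le_rfl] at hlt
        obtain ⟨j, hj, hjs⟩ := hlt
        refine hhitω ?_
        simp only [hhit_def, Set.mem_iUnion, Set.mem_setOf_eq, Finset.mem_range]
        exact ⟨j, lt_of_lt_of_le hj.2 (Nat.le_succ n), hjs⟩
      have hHt_eq : Ht ω = n := le_antisymm (hHt_le ω) (not_lt.mp hHt_ge)
      show n - 1 < ρ ω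
      simp only [hρ_def, hτn_eq, hHt_eq, min_self]
      omega
  have hm1 : (μ {ω | ((n:ℕ):ℕ∞) < τ ω}).toReal
      ≤ (μ hit).toReal + (μ {ω | n - 1 < ρ ω}).toReal := by
    have hle := (measure_mono hincl).trans (measure_union_le (μ := μ) hit {ω | n - 1 < ρ ω})
    calc (μ {ω | ((n:ℕ):ℕ∞) < τ ω}).toReal
        ≤ (μ hit + μ {ω | n - 1 < ρ ω}).toReal :=
          ENNReal.toReal_mono
            (ENNReal.add_ne_top.2 ⟨measure_ne_top _ _, measure_ne_top _ _⟩) hle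
      _ = (μ hit).toReal + (μ {ω | n - 1 < ρ ω}).toReal :=
          ENNReal.toReal_add (measure_ne_top _ _) (measure_ne_top _ _)
  -- sum lower bound
  have hsum_lb : (n:ℝ) * (μ {ω | n - 1 < ρ ω}).toReal
      ≤ ∑ t ∈ Finset.range n, (μ {ω | t < ρ ω}).toReal := by
    have hterm : ∀ t ∈ Finset.range n,
        (μ {ω | n - 1 < ρ ω}).toReal ≤ (μ {ω | t < ρ ω}).toReal := by
      intro t ht
      have htn : t < n := Finset.mem_range.mp ht
      refine ENNReal.toReal_mono (measure_ne_top _ _) (measure_mono ?_)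
      intro ω hω
      exact lt_of_le_of_lt (by omega : t ≤ n - 1) hω
    calc (n:ℝ) * (μ {ω | n - 1 < ρ ω}).toReal
        = ∑ _t ∈ Finset.range n, (μ {ω | n - 1 < ρ ω}).toReal := by
          rw [Finset.sum_const, Finset.card_range, nsmul_eq_mul]
      _ ≤ _ := Finset.sum_le_sum hterm
  -- final numeric assembly
  have hP1 : (μ hit).toReal ≤ 2*k/S := by
    have h1 : (μ hit).toReal ≤ k / h := by
      rw [le_div_iff₀ hhpos]
      linarith [hhit_bound]
    have h2 : k / h = 2*k/S := by
      rw [hh_def, div_div_eq_mul_div]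
      ring
    linarith
  have hP2 : (μ {ω | n - 1 < ρ ω}).toReal ≤ 2*k/S := by
    have hq1 : σ^2 * ((n:ℝ) * (μ {ω | n - 1 < ρ ω}).toReal) ≤ (h + 2*B)*k := by
      calc σ^2 * ((n:ℝ) * (μ {ω | n - 1 < ρ ω}).toReal)
          ≤ σ^2 * ∑ t ∈ Finset.range n, (μ {ω | t < ρ ω}).toReal :=
            mul_le_mul_of_nonneg_left hsum_lb (sq_nonneg σ)
        _ ≤ ∫ ω, (stoppedValue M (fun ω => (ρ ω : WithTop ℕ)) ω)^2 ∂μ := hsum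
        _ ≤ (h + 2*B)*k := hsv2sq
    have h10 : 10*B ≤ 3*S := by
      by_contra hcon
      push_neg at hcon
      have hsq : (3*S)^2 < (10*B)^2 := by
        have h3S : 0 < 3*S := by linarith
        nlinarith
      nlinarith [hS2, h12]
    have hBS : 2*B*S ≤ (3/5)*S^2 := by nlinarith [mul_le_mul_of_nonneg_right h10 hS.le]
    have hhS : (h + 2*B)*S ≤ 2*(σ^2*(n:ℝ)) := by
      have hnu' : u - 1 < (n:ℝ) := by linarith
      have he : (h+2*B)*S = S^2/2 + 2*B*S := by rw [hh_def]; ring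
      rw [he, hS2]
      have hx1 : σ^2*(u-1) < σ^2*(n:ℝ) := mul_lt_mul_of_pos_left hnu' hσ2
      have hx2 : σ^2*3 < σ^2*u := mul_lt_mul_of_pos_left hu3 hσ2
      have hBS' : 2*B*S ≤ (3/5)*(σ^2*u) := by rw [← hS2]; exact hBS
      nlinarith
    have hdiv : (h+2*B)*k/(σ^2*(n:ℝ)) ≤ 2*k/S := by
      rw [div_le_div_iff₀ (by positivity) hS]
      have := mul_le_mul_of_nonneg_left hhS hk0
      nlinarith
    have hq2 : (μ {ω | n - 1 < ρ ω}).toReal ≤ (h+2*B)*k/(σ^2*(n:ℝ)) := by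
      rw [le_div_iff₀ (by positivity)]
      nlinarith [hq1]
    linarith
  calc (μ {ω | ((n:ℕ):ℕ∞) < τ ω}).toReal
      ≤ (μ hit).toReal + (μ {ω | n - 1 < ρ ω}).toReal := hm1
    _ ≤ 2*k/S + 2*k/S := add_le_add hP1 hP2
    _ = 4*k/S := by ring

end MultiIsing
end
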